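/- arXiv:1904.01517 — 5 statements merged into one kernel-verified Lean document; each statement's English description precedes it below -/
import Mathlib

section
/- Let d ∈ ℕ, 𝔡 ∈ {1, …, d−1}, let N ⊆ ℝ^d be a nonempty 𝔡-dimensional C^1-submanifold of ℝ^d, and let V ⊆ ℝ^d be an open set admitting the C^1 nearest-point projection x ↦ x_* onto N. Then for every x ∈ V with x ∉ N, the distance function y ↦ dd(y, N) is Fréchet differentiable at x and its gradient at x equals (x − x_*)/‖x − x_*‖; equivalently, its Fréchet derivative at x is the linear functional v ↦ ⟪(x − x_*)/‖x − x_*‖, v⟫. -/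
noncomputable section

/-- `N` is a `𝔡`-dimensional `C¹`-submanifold of `ℝ^d`: around every point of `N` there are an
open set `W` and a continuously differentiable map `Φ : ℝ^d → ℝ^(d−𝔡)` whose Fréchet derivative
is surjective at every point of `W` such that `N ∩ W = {y ∈ W : Φ y = 0}`. -/
def IsC1Submanifold (d 𝔡 : ℕ) (N : Set (EuclideanSpace ℝ (Fin d))) : Prop :=
  ∀ x ∈ N, ∃ (W : Set (EuclideanSpace ℝ (Fin d)))
    (Φ : EuclideanSpace ℝ (Fin d) → EuclideanSpace ℝ (Fin (d - 𝔡))),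
    IsOpen W ∧ x ∈ W ∧ ContDiff ℝ 1 Φ ∧
    (∀ y ∈ W, Function.Surjective (fderiv ℝ Φ y)) ∧
    N ∩ W = {y ∈ W | Φ y = 0}

/-- The open set `V` admits the `C¹` nearest-point projection `p` onto `N`: for every `x ∈ V`,
`p x` is the unique nearest point of `N` to `x`, and `p` is continuously differentiable on `V`. -/
def AdmitsC1Proj {d : ℕ} (N V : Set (EuclideanSpace ℝ (Fin d)))
    (p : EuclideanSpace ℝ (Fin d) → EuclideanSpace ℝ (Fin d)) : Prop :=
  (∀ x ∈ V, p x ∈ N ∧ ‖x - p x‖ = Metric.infDist x N ∧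
      ∀ y ∈ N, ‖x - y‖ = Metric.infDist x N → y = p x) ∧
  ContDiffOn ℝ 1 p V

/-- The tubular neighborhood `V_{R,δ}(x₀)`: points `x + v` with `x ∈ closedBall x₀ R ∩ N` and
`v ⊥ T_x N`, `‖v‖ < δ`. -/
def VRd {d : ℕ} (N : Set (EuclideanSpace ℝ (Fin d))) (x₀ : EuclideanSpace ℝ (Fin d))
    (R δ : ℝ) : Set (EuclideanSpace ℝ (Fin d)) :=
  {y | ∃ x ∈ Metric.closedBall x₀ R ∩ N, ∃ v : EuclideanSpace ℝ (Fin d),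
    (∀ w ∈ tangentConeAt ℝ N x, inner ℝ v w = (0 : ℝ)) ∧ ‖v‖ < δ ∧ y = x + v}

/-- The Hessian of `f` at `θ`, as the (continuous) linear map obtained by differentiating the
gradient; it satisfies `⟪hess f θ v, w⟫ = D²f(θ)(v, w)` for `C²` functions `f`. -/
def hess {d : ℕ} (f : EuclideanSpace ℝ (Fin d) → ℝ) (θ : EuclideanSpace ℝ (Fin d)) :
    EuclideanSpace ℝ (Fin d) →L[ℝ] EuclideanSpace ℝ (Fin d) :=
  fderiv ℝ (gradient f) θ

end

open scoped RealInnerProductSpace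

lemma hasGradientAt_norm_sub {E : Type*} [NormedAddCommGroup E] [InnerProductSpace ℝ E]
    [CompleteSpace E] (c x : E) (h : x ≠ c) :
    HasGradientAt (fun y => ‖y - c‖) (‖x - c‖⁻¹ • (x - c)) x := by
  have hsub : x - c ≠ 0 := sub_ne_zero.mpr h
  have hne : ⟪x - c, x - c⟫ ≠ 0 := by
    rw [real_inner_self_eq_norm_sq]
    exact pow_ne_zero 2 (norm_ne_zero_iff.mpr hsub)
  have h1 : HasFDerivAt (fun y : E => ⟪y - c, y - c⟫)
      ((fderivInnerCLM ℝ (x - c, x - c)).comp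
        ((ContinuousLinearMap.id ℝ E).prod (ContinuousLinearMap.id ℝ E))) x := by
    simpa using ((hasFDerivAt_id x).sub_const c).inner ℝ ((hasFDerivAt_id x).sub_const c)
  have h2 := (Real.hasDerivAt_sqrt hne).comp_hasFDerivAt x h1
  rw [hasGradientAt_iff_hasFDerivAt]
  have heq : (fun y : E => ‖y - c‖) = fun y => Real.sqrt ⟪y - c, y - c⟫ := by
    funext y
    rw [real_inner_self_eq_norm_sq, Real.sqrt_sq (norm_nonneg _)]
  rw [heq]
  refine h2.congr_fderiv ?_
  ext v
  simp [real_inner_smul_left, real_inner_self_eq_norm_sq, Real.sqrt_sq (norm_nonneg (x - c)),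
    real_inner_comm (x - c) v]
  have : ‖x - c‖ ≠ 0 := norm_ne_zero_iff.mpr hsub
  rw [inner_sub_left]
  field_simp
  ring

private theorem stmt_4_aux (d : ℕ)
    (N : Set (EuclideanSpace ℝ (Fin d)))
    (V : Set (EuclideanSpace ℝ (Fin d))) (hVopen : IsOpen V)
    (p : EuclideanSpace ℝ (Fin d) → EuclideanSpace ℝ (Fin d))
    (hprop : ∀ x ∈ V, p x ∈ N ∧ ‖x - p x‖ = Metric.infDist x N ∧
      ∀ y ∈ N, ‖x - y‖ = Metric.infDist x N → y = p x)
    (hsmooth : ContDiffOn ℝ 1 p V) :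
    ∀ x ∈ V, x ∉ N →
      HasGradientAt (fun y => Metric.infDist y N) (‖x - p x‖⁻¹ • (x - p x)) x := by
  intro x hx hxN
  obtain ⟨hpxN, hdist, _⟩ := hprop x hx
  have hxpx : x ≠ p x := fun h => hxN (h ▸ hpxN)
  have hsub : x - p x ≠ 0 := sub_ne_zero.mpr hxpx
  set g : EuclideanSpace ℝ (Fin d) := ‖x - p x‖⁻¹ • (x - p x) with hg
  rw [hasGradientAt_iff_isLittleO]
  have hupper := hasGradientAt_norm_sub (p x) x hxpx
  rw [hasGradientAt_iff_isLittleO] at hupper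
  rw [Asymptotics.isLittleO_iff] at hupper ⊢
  intro ε hε
  have h1 := hupper hε
  -- continuity facts
  have hpc : ContinuousAt p x := (hsmooth.continuousOn.continuousAt (hVopen.mem_nhds hx))
  have hbc : ContinuousAt (fun y => x - p y) x := continuousAt_const.sub hpc
  have hbne : ∀ᶠ y in nhds x, x - p y ≠ 0 := hbc.eventually_ne hsub
  have huc : ContinuousAt (fun y => ‖x - p y‖⁻¹ • (x - p y)) x := by
    apply ContinuousAt.smul (f := fun y => ‖x - p y‖⁻¹) _ hbc
    exact (hbc.norm.inv₀ (norm_ne_zero_iff.mpr hsub))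
  have hug : Filter.Tendsto (fun y => ‖x - p y‖⁻¹ • (x - p y)) (nhds x) (nhds g) := huc.tendsto
  have hεev : ∀ᶠ y in nhds x, ‖(‖x - p y‖⁻¹ • (x - p y)) - g‖ < ε := by
    have := Metric.tendsto_nhds.mp hug ε hε
    filter_upwards [this] with y hy
    rwa [dist_eq_norm] at hy
  filter_upwards [h1, hbne, hεev, hVopen.mem_nhds hx] with y hy1 hy2 hy3 hyV
  obtain ⟨hpyN, hdisty, _⟩ := hprop y hyV
  set b : EuclideanSpace ℝ (Fin d) := x - p y with hb
  set u : EuclideanSpace ℝ (Fin d) := ‖b‖⁻¹ • b with hu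
  have hbn : ‖b‖ ≠ 0 := norm_ne_zero_iff.mpr hy2
  rw [Real.norm_eq_abs, abs_le]
  constructor
  · -- lower bound
    have hA : Metric.infDist x N ≤ ‖b‖ := by
      rw [hb, ← dist_eq_norm]
      exact Metric.infDist_le_dist_of_mem hpyN
    have hB : Metric.infDist y N = ‖y - p y‖ := hdisty.symm
    have hdecomp : y - p y = b + (y - x) := by rw [hb]; abel
    have hkey : ‖b‖ + ⟪u, y - x⟫ ≤ ‖y - p y‖ := by
      have h5 : ⟪u, y - p y⟫ ≤ ‖u‖ * ‖y - p y‖ := real_inner_le_norm u (y - p y)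
      have h6 : ‖u‖ = 1 := by
        rw [hu, norm_smul, norm_inv, norm_norm, inv_mul_cancel₀ hbn]
      have h7 : ⟪u, y - p y⟫ = ‖b‖ + ⟪u, y - x⟫ := by
        rw [hdecomp, inner_add_right, hu, real_inner_smul_left,
          real_inner_self_eq_norm_sq, sq, inv_mul_cancel_left₀ hbn]
      rw [h6, one_mul] at h5
      linarith [h7 ▸ h5]
    have hCS : ⟪g - u, y - x⟫ ≤ ‖g - u‖ * ‖y - x‖ := real_inner_le_norm _ _
    have hgu : ‖g - u‖ ≤ ε := by
      rw [norm_sub_rev]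
      exact le_of_lt hy3
    have : ⟪g - u, y - x⟫ = ⟪g, y - x⟫ - ⟪u, y - x⟫ := inner_sub_left _ _ _
    nlinarith [norm_nonneg (y - x), mul_le_mul_of_nonneg_right hgu (norm_nonneg (y - x))]
  · -- upper bound
    have hA : Metric.infDist y N ≤ ‖y - p x‖ := by
      rw [← dist_eq_norm]
      exact Metric.infDist_le_dist_of_mem hpxN
    have h5 : ‖y - p x‖ - ‖x - p x‖ - ⟪g, y - x⟫ ≤ ε * ‖y - x‖ := by
      have := hy1
      rw [Real.norm_eq_abs] at this
      linarith [abs_le.mp this |>.2, le_abs_self (‖y - p x‖ - ‖x - p x‖ - ⟪g, y - x⟫)]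
    linarith [hA, hdist.symm ▸ le_refl (Metric.infDist x N)]


/-- **Gradient of the distance function** (Lemma 2.4).  If `V` is an open set admitting the `C¹`
nearest-point projection `p` onto the nonempty `𝔡`-dimensional `C¹`-submanifold `N ⊆ ℝ^d`,
`𝔡 ∈ {1,…,d−1}`, then for every `x ∈ V` with `x ∉ N` the distance function `y ↦ dd(y, N)` has
at `x` the gradient `(x − p x)/‖x − p x‖`. -/

theorem stmt_4 (d 𝔡 : ℕ) (hd : 1 ≤ 𝔡) (h𝔡 : 𝔡 ≤ d - 1)
    (N : Set (EuclideanSpace ℝ (Fin d))) (hNne : N.Nonempty)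
    (hN : IsC1Submanifold d 𝔡 N)
    (V : Set (EuclideanSpace ℝ (Fin d))) (hVopen : IsOpen V)
    (p : EuclideanSpace ℝ (Fin d) → EuclideanSpace ℝ (Fin d))
    (hproj : AdmitsC1Proj N V p) :
    ∀ x ∈ V, x ∉ N →
      HasGradientAt (fun y => Metric.infDist y N) (‖x - p x‖⁻¹ • (x - p x)) x := by
  intro x hx hxN
  exact stmt_4_aux d N V hVopen p hproj.1 hproj.2 x hx hxN
end

section
/- Let d ∈ ℕ, 𝔡 ∈ {1, …, d−1}, let N ⊆ ℝ^d be a nonempty 𝔡-dimensional C^1-submanifold of ℝ^d, let x₀ ∈ N, assume there exists r₁ > 0 such that (the closed ball of radius r₁ around x₀) ∩ N is a closed subset of ℝ^d, and let V* ⊆ ℝ^d be an open set containing x₀ that admits the C^1 nearest-point projection x ↦ x_* onto N. Then there exist R₀, δ₀ ∈ (0, ∞) such that for every R ∈ (0, R₀] and δ ∈ (0, δ₀]: (i) the closure of V_{R,δ}(x₀) is contained in V*; (ii) V_{R,δ}(x₀) = {x ∈ ℝ^d : dd(x, N) = dd(x, (closed ball of radius R around x₀) ∩ N) < δ}; and (iii)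 for every x ∈ (closed ball of radius R around x₀) ∩ N and every v ∈ T_x N^⊥ with ‖v‖ < δ, the nearest-point projection of x + v onto N equals x. -/
set_option linter.unusedSectionVars false
set_option linter.unnecessarySimpa false
set_option maxHeartbeats 1000000

open Metric Set Filter Topology
open scoped RealInnerProductSpace

section Helpers

variable {E : Type*} [NormedAddCommGroup E] [InnerProductSpace ℝ E]
variable {N V : Set E} {p : E → E}

def ProjHyp (N V : Set E) (p : E → E) : Prop :=
  ∀ x ∈ V, p x ∈ N ∧ ‖x - p x‖ = Metric.infDist x N ∧
      ∀ y ∈ N, ‖x - y‖ = Metric.infDist x N → y = p x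

theorem ProjHyp.proj_self (hP : ProjHyp N V p) {x : E} (hx : x ∈ N) (hxV : x ∈ V) :
    p x = x := by
  have h := (hP x hxV).2.1
  rw [Metric.infDist_zero_of_mem hx, norm_eq_zero, sub_eq_zero] at h
  exact h.symm

theorem ProjHyp.segment_proj (hP : ProjHyp N V p) {y : E} (hy : y ∈ V) {s : ℝ}
    (hs : s ∈ Icc (0:ℝ) 1) (hw : p y + s • (y - p y) ∈ V) :
    p (p y + s • (y - p y)) = p y := by
  set w := p y + s • (y - p y) with hwdef
  have hpyN : p y ∈ N := (hP y hy).1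
  have hyd : ‖y - p y‖ = Metric.infDist y N := (hP y hy).2.1
  have hdw : ‖w - p y‖ = s * ‖y - p y‖ := by
    have : w - p y = s • (y - p y) := by rw [hwdef]; abel
    rw [this, norm_smul, Real.norm_eq_abs, abs_of_nonneg hs.1]
  have hyw : ‖y - w‖ = (1 - s) * ‖y - p y‖ := by
    have : y - w = (1 - s) • (y - p y) := by
      rw [hwdef, sub_smul, one_smul]; abel
    rw [this, norm_smul, Real.norm_eq_abs, abs_of_nonneg (by linarith [hs.2])]
  have key : ∀ z ∈ N, s * ‖y - p y‖ ≤ ‖w - z‖ := by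
    intro z hz
    have h1 : ‖y - p y‖ ≤ ‖y - z‖ := by
      rw [hyd, ← dist_eq_norm]; exact Metric.infDist_le_dist_of_mem hz
    have h2 : ‖y - z‖ ≤ ‖y - w‖ + ‖w - z‖ := by
      have : y - z = (y - w) + (w - z) := by abel
      rw [this]; exact norm_add_le _ _
    nlinarith [norm_nonneg (y - p y)]
  have hinf_le : Metric.infDist w N ≤ s * ‖y - p y‖ := by
    have := Metric.infDist_le_dist_of_mem (x := w) hpyN
    rwa [dist_eq_norm, hdw] at this
  have hwd : ‖w - p w‖ = Metric.infDist w N := (hP w hw).2.1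
  have hge : s * ‖y - p y‖ ≤ Metric.infDist w N := by
    rw [← hwd]; exact key (p w) (hP w hw).1
  have heq : ‖w - p y‖ = Metric.infDist w N := by rw [hdw]; linarith
  exact ((hP w hw).2.2 (p y) hpyN heq).symm

theorem const_ray_fderiv_zero (hV : IsOpen V) (hp : ContDiffOn ℝ 1 p V) {x : E} (hx : x ∈ V)
    {w : E} (hconst : ∀ s ∈ Icc (0:ℝ) 1, p (x + s • w) = p x) : fderiv ℝ p x w = 0 := by
  have hd : DifferentiableAt ℝ p x :=
    (hp.differentiableOn one_ne_zero).differentiableAt (hV.mem_nhds hx)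
  have hc : HasDerivAt (fun s : ℝ => x + s • w) w 0 := by
    simpa using ((hasDerivAt_id (0:ℝ)).smul_const w).const_add x
  have hd' : HasFDerivAt p (fderiv ℝ p x) (x + (0:ℝ) • w) := by
    simpa using hd.hasFDerivAt
  have h1 : HasDerivAt (fun s : ℝ => p (x + s • w)) (fderiv ℝ p x w) 0 :=
    hd'.comp_hasDerivAt 0 hc
  have h2 : HasDerivWithinAt (fun s : ℝ => p (x + s • w)) 0 (Icc 0 1) 0 := by
    refine (hasDerivWithinAt_const 0 _ (p x)).congr hconst ?_
    simpa using hconst 0 ⟨le_rfl, zero_le_one⟩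
  have hu : UniqueDiffWithinAt ℝ (Icc (0:ℝ) 1) 0 :=
    uniqueDiffOn_Icc_zero_one 0 ⟨le_rfl, zero_le_one⟩
  have e1 := h1.hasDerivWithinAt.derivWithin hu
  have e2 := h2.derivWithin hu
  rw [e2] at e1; exact e1.symm

theorem kernel_fderiv (hV : IsOpen V) (hp : ContDiffOn ℝ 1 p V) (hP : ProjHyp N V p)
    {y : E} (hy : y ∈ V)
    (hseg : ∀ s ∈ Icc (0:ℝ) 1, p y + s • (y - p y) ∈ V) :
    fderiv ℝ p y (y - p y) = 0 := by
  have hconst : ∀ s ∈ Icc (0:ℝ) 1, p (y + s • (p y - y)) = p y := by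
    intro s hs
    have hs' : (1 - s) ∈ Icc (0:ℝ) 1 := ⟨by linarith [hs.2], by linarith [hs.1]⟩
    have hrw : y + s • (p y - y) = p y + (1 - s) • (y - p y) := by module
    rw [hrw]
    exact hP.segment_proj hy hs' (hseg _ hs')
  have h0 := const_ray_fderiv_zero hV hp hy hconst
  have hneg : y - p y = -(p y - y) := by abel
  rw [hneg, map_neg, h0, neg_zero]

theorem ray_extension (hV : IsOpen V) (hp : ContDiffOn ℝ 1 p V) (hP : ProjHyp N V p)
    {z ν : E} {a b M : ℝ}
    (ha : 0 < a) (hab : a ≤ b) (hbase : p (z + a • ν) = z)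
    (hrayV : ∀ s ∈ Icc a b, z + s • ν ∈ V)
    (hsegV : ∀ s ∈ Icc a b, ∀ σ ∈ Icc (0:ℝ) 1,
      p (z + s • ν) + σ • ((z + s • ν) - p (z + s • ν)) ∈ V)
    (hM : ∀ s ∈ Icc a b, ‖fderiv ℝ p (z + s • ν)‖ ≤ M) :
    ∀ s ∈ Icc a b, p (z + s • ν) = z := by
  set γ : ℝ → E := fun s => z + s • ν with hγdef
  set f : ℝ → E := fun s => p (γ s) - z with hfdef
  set f' : ℝ → E := fun s => fderiv ℝ p (γ s) ν with hf'def
  have hγcont : Continuous γ := by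
    exact continuous_const.add (continuous_id.smul continuous_const)
  have hcont : ContinuousOn f (Icc a b) :=
    (hp.continuousOn.comp hγcont.continuousOn fun s hs => hrayV s hs).sub continuousOn_const
  have hder : ∀ s ∈ Ico a b, HasDerivWithinAt f (f' s) (Ici s) s := by
    intro s hs
    have hsV : γ s ∈ V := hrayV s ⟨hs.1, hs.2.le⟩
    have hd : DifferentiableAt ℝ p (γ s) :=
      (hp.differentiableOn one_ne_zero).differentiableAt (hV.mem_nhds hsV)
    have hγ : HasDerivAt γ ν s := by
      simpa [hγdef] using ((hasDerivAt_id s).smul_const ν).const_add z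
    exact ((hd.hasFDerivAt.comp_hasDerivAt s hγ).sub_const z).hasDerivWithinAt
  have hM0 : 0 ≤ M := le_trans (norm_nonneg _) (hM a ⟨le_rfl, hab⟩)
  have bound : ∀ s ∈ Ico a b, ‖f' s‖ ≤ (M / a) * ‖f s‖ + 0 := by
    intro s hs
    have hsIcc : s ∈ Icc a b := ⟨hs.1, hs.2.le⟩
    have hs0 : 0 < s := lt_of_lt_of_le ha hs.1
    have hker : fderiv ℝ p (γ s) (γ s - p (γ s)) = 0 :=
      kernel_fderiv hV hp hP (hrayV s hsIcc) fun σ hσ => hsegV s hsIcc σ hσ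
    have hrw : γ s - p (γ s) = s • ν - f s := by
      rw [hfdef]; simp only [hγdef]; abel
    have heq : s • f' s = fderiv ℝ p (γ s) (f s) := by
      rw [hrw, map_sub, map_smul, sub_eq_zero] at hker
      simpa [hf'def] using hker
    have h2 : ‖fderiv ℝ p (γ s) (f s)‖ ≤ M * ‖f s‖ :=
      le_trans (ContinuousLinearMap.le_opNorm _ _)
        (mul_le_mul_of_nonneg_right (hM s hsIcc) (norm_nonneg _))
    have h1 : s * ‖f' s‖ = ‖s • f' s‖ := by
      rw [norm_smul, Real.norm_eq_abs, abs_of_pos hs0]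
    have h3 : s * ‖f' s‖ ≤ M * ‖f s‖ := by rw [h1, heq]; exact h2
    have h4 : ‖f' s‖ ≤ M * ‖f s‖ / s := by
      rw [le_div_iff₀ hs0]; linarith [h3]
    have h5 : M * ‖f s‖ / s ≤ M * ‖f s‖ / a := by
      apply div_le_div_of_nonneg_left ?_ ha hs.1
      · positivity
    calc ‖f' s‖ ≤ M * ‖f s‖ / a := le_trans h4 h5
      _ = (M / a) * ‖f s‖ + 0 := by ring
  have hfa : ‖f a‖ ≤ 0 := by simp [hfdef, hγdef, hbase]
  have hgron := norm_le_gronwallBound_of_norm_deriv_right_le hcont hder hfa bound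
  intro s hs
  have h := hgron s hs
  rw [gronwallBound_ε0_δ0] at h
  have h0 : f s = 0 := norm_le_zero_iff.1 h
  have := sub_eq_zero.1 h0
  simpa [hfdef, hγdef] using this

theorem fixed_dir (hV : IsOpen V) (hp : ContDiffOn ℝ 1 p V) (hP : ProjHyp N V p)
    {x : E} (hxV : x ∈ V) (hxN : x ∈ N) {w : E}
    (hw : w ∈ tangentConeAt ℝ N x) : fderiv ℝ p x w = w := by
  obtain ⟨c, dd, hd0', hdN, hcd⟩ := mem_tangentConeAt_iff_exists_seq.1 hw
  have hd : DifferentiableAt ℝ p x :=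
    (hp.differentiableOn one_ne_zero).differentiableAt (hV.mem_nhds hxV)
  set A := fderiv ℝ p x with hA
  have hd0 : Tendsto dd atTop (𝓝 0) := hd0'
  have hxd : Tendsto (fun n => x + dd n) atTop (𝓝 x) := by
    simpa using tendsto_const_nhds.add hd0
  have hVev : ∀ᶠ n in atTop, x + dd n ∈ V := hxd.eventually (hV.mem_nhds hxV)
  have hpfix : ∀ᶠ n in atTop, p (x + dd n) = x + dd n :=
    (hdN.and hVev).mono fun n ⟨h1, h2⟩ => hP.proj_self h1 h2
  have hpx : p x = x := hP.proj_self hxN hxV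
  have hlo : (fun n => p (x + dd n) - p x - A (dd n)) =o[atTop] dd := by
    have h1 : (fun h : E => p (x + h) - p x - A h) =o[𝓝 0] (fun h => h) :=
      hasFDerivAt_iff_isLittleO_nhds_zero.1 hd.hasFDerivAt
    exact h1.comp_tendsto hd0
  have h1 : Tendsto (fun n => c n • dd n - A (c n • dd n)) atTop (𝓝 (w - A w)) :=
    hcd.sub ((A.continuous.tendsto w).comp hcd)
  have h2 : Tendsto (fun n => c n • dd n - A (c n • dd n)) atTop (𝓝 0) := by
    rw [NormedAddCommGroup.tendsto_nhds_zero]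
    intro ε hε
    have hBev : ∀ᶠ n in atTop, ‖c n • dd n‖ ≤ ‖w‖ + 1 :=
      (hcd.norm.eventually_le_const (by linarith))
    have hloev : ∀ᶠ n in atTop,
        ‖p (x + dd n) - p x - A (dd n)‖ ≤ (ε / (2 * (‖w‖ + 1))) * ‖dd n‖ := by
      have hpos : 0 < ε / (2 * (‖w‖ + 1)) := by positivity
      simpa using hlo.def hpos
    filter_upwards [hBev, hloev, hpfix] with n hB hlon hfix
    have hrw : c n • dd n - A (c n • dd n) = c n • (dd n - A (dd n)) := by
      rw [smul_sub, A.map_smul]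
    have hrw2 : dd n - A (dd n) = p (x + dd n) - p x - A (dd n) := by
      rw [hfix, hpx]; abel
    rw [hrw, hrw2]
    have : ‖c n • (p (x + dd n) - p x - A (dd n))‖
        = ‖c n‖ * ‖p (x + dd n) - p x - A (dd n)‖ := norm_smul _ _
    rw [this]
    have hcn : 0 ≤ ‖c n‖ := norm_nonneg _
    have : ‖c n‖ * ‖p (x + dd n) - p x - A (dd n)‖
        ≤ ‖c n‖ * ((ε / (2 * (‖w‖ + 1))) * ‖dd n‖) := by
      exact mul_le_mul_of_nonneg_left hlon hcn
    have h3 : ‖c n‖ * ((ε / (2 * (‖w‖ + 1))) * ‖dd n‖)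
        = (ε / (2 * (‖w‖ + 1))) * ‖c n • dd n‖ := by
      rw [norm_smul]; ring
    have hwpos : (0:ℝ) < ‖w‖ + 1 := by positivity
    calc ‖c n‖ * ‖p (x + dd n) - p x - A (dd n)‖
        ≤ (ε / (2 * (‖w‖ + 1))) * ‖c n • dd n‖ := by rw [← h3]; exact this
      _ ≤ (ε / (2 * (‖w‖ + 1))) * (‖w‖ + 1) := by
          apply mul_le_mul_of_nonneg_left hB (by positivity)
      _ = ε / 2 := by field_simp
      _ < ε := by linarith
  have huniq : w - A w = 0 := tendsto_nhds_unique h1 h2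
  rw [sub_eq_zero] at huniq; exact huniq.symm

/-- symmetry of the derivative of the projection -/

theorem symm_fderiv (hV : IsOpen V) (hp : ContDiffOn ℝ 1 p V) (hP : ProjHyp N V p)
    {x : E} (hx : x ∈ V) (a b : E) :
    ⟪fderiv ℝ p x a, b⟫ = ⟪a, fderiv ℝ p x b⟫ := by
  set g : E → ℝ := fun y => Metric.infDist y N ^ 2 with hgdef
  set D : E → (E →L[ℝ] ℝ) := fun y => innerSL ℝ ((2:ℝ) • (y - p y)) with hDdef
  have hg : ∀ y ∈ V, HasFDerivAt g (D y) y := by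
    intro y hy
    rw [hasFDerivAt_iff_isLittleO_nhds_zero]
    rw [Asymptotics.isLittleO_iff]
    intro c hc
    have tadd : Tendsto (fun h : E => y + h) (𝓝 0) (𝓝 y) :=
      (continuous_const.add continuous_id).tendsto' 0 y (by simp)
    have hyV : ∀ᶠ h : E in 𝓝 0, y + h ∈ V := tadd.eventually (hV.mem_nhds hy)
    have hsmall : ∀ᶠ h : E in 𝓝 0, ‖h‖ ≤ c / 8 :=
      tendsto_norm_zero.eventually_le_const (by linarith)
    have hpcont : ∀ᶠ h : E in 𝓝 0, ‖p (y + h) - p y‖ ≤ c / 8 := by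
      have hcy : ContinuousAt p y := hp.continuousOn.continuousAt (hV.mem_nhds hy)
      have t2 : Tendsto (fun h : E => p (y + h) - p y) (𝓝 0) (𝓝 0) := by
        have := (hcy.tendsto.comp tadd).sub (tendsto_const_nhds (x := p y))
        simpa using this
      exact (t2.norm.eventually_le_const (by simpa using (show (0:ℝ) < c/8 by linarith)))
    filter_upwards [hyV, hsmall, hpcont] with h hhV hh hpc
    set q := y - p y with hq
    set q' := (y + h) - p (y + h) with hq'
    have gy : g y = ‖q‖ ^ 2 := by rw [hgdef]; simp only; rw [← (hP y hy).2.1]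
    have gy' : g (y + h) = ‖q'‖ ^ 2 := by rw [hgdef]; simp only; rw [← (hP (y+h) hhV).2.1]
    have hpyN : p y ∈ N := (hP y hy).1
    have hpy'N : p (y + h) ∈ N := (hP (y+h) hhV).1
    have up : ‖q'‖ ^ 2 ≤ ‖h + q‖ ^ 2 := by
      have h1 : Metric.infDist (y + h) N ≤ ‖h + q‖ := by
        have := Metric.infDist_le_dist_of_mem (x := y + h) hpyN
        rw [dist_eq_norm] at this
        have e : y + h - p y = h + q := by rw [hq]; abel
        rwa [e] at this
      have h2 : ‖q'‖ = Metric.infDist (y + h) N := (hP (y+h) hhV).2.1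
      rw [h2]
      exact pow_le_pow_left₀ Metric.infDist_nonneg h1 2
    have low : ‖q‖ ^ 2 ≤ ‖q' - h‖ ^ 2 := by
      have h1 : Metric.infDist y N ≤ ‖q' - h‖ := by
        have := Metric.infDist_le_dist_of_mem (x := y) hpy'N
        rw [dist_eq_norm] at this
        have e : y - p (y + h) = q' - h := by rw [hq']; abel
        rwa [e] at this
      have h2 : ‖q‖ = Metric.infDist y N := (hP y hy).2.1
      rw [h2]
      exact pow_le_pow_left₀ Metric.infDist_nonneg h1 2
    have hDyh : D y h = 2 * ⟪q, h⟫ := by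
      rw [hDdef]; simp only [innerSL_apply_apply]
      rw [real_inner_smul_left]
    have exp1 : ‖h + q‖ ^ 2 = ‖h‖ ^ 2 + 2 * ⟪h, q⟫ + ‖q‖ ^ 2 := norm_add_sq_real h q
    have exp2 : ‖q' - h‖ ^ 2 = ‖q'‖ ^ 2 - 2 * ⟪q', h⟫ + ‖h‖ ^ 2 := norm_sub_sq_real q' h
    have hcomm : ⟪h, q⟫ = ⟪q, h⟫ := real_inner_comm _ _
    -- T := g (y+h) - g y - D y h
    have hub : g (y + h) - g y - D y h ≤ ‖h‖ ^ 2 := by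
      rw [gy, gy', hDyh]; nlinarith [up, exp1, hcomm]
    have hqq' : ‖q' - q‖ ≤ ‖h‖ + ‖p (y + h) - p y‖ := by
      have e : q' - q = h - (p (y + h) - p y) := by rw [hq, hq']; abel
      rw [e]; exact norm_sub_le _ _
    have hip : |⟪q' - q, h⟫| ≤ ‖q' - q‖ * ‖h‖ := abs_real_inner_le_norm _ _
    have hlb : -(‖q' - q‖ * ‖h‖) * 2 - ‖h‖ ^ 2 ≤ g (y + h) - g y - D y h := by
      rw [gy, gy', hDyh]
      have hsplit : ⟪q', h⟫ = ⟪q' - q, h⟫ + ⟪q, h⟫ := by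
        rw [← inner_add_left]; norm_num
      nlinarith [low, exp2, hip, abs_le.1 hip]
    have hn0 : (0:ℝ) ≤ ‖h‖ := norm_nonneg _
    rw [Real.norm_eq_abs, abs_le]
    constructor
    · nlinarith [hqq', hip, abs_le.1 hip, hlb, norm_nonneg (p (y+h) - p y), norm_nonneg (q' - q)]
    · nlinarith [hub]
  have hevg : ∀ᶠ y in 𝓝 x, HasFDerivAt g (D y) y :=
    Filter.eventually_of_mem (hV.mem_nhds hx) hg
  have hdp : DifferentiableAt ℝ p x :=
    (hp.differentiableOn one_ne_zero).differentiableAt (hV.mem_nhds hx)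
  set A := fderiv ℝ p x with hA
  have hh : HasFDerivAt (fun y => (2:ℝ) • (y - p y))
      ((2:ℝ) • (ContinuousLinearMap.id ℝ E - A)) x :=
    ((hasFDerivAt_id x).sub hdp.hasFDerivAt).const_smul (2:ℝ)
  have hD : HasFDerivAt D
      ((innerSL ℝ (E := E)).comp ((2:ℝ) • (ContinuousLinearMap.id ℝ E - A))) x :=
    (innerSL ℝ (E := E)).hasFDerivAt.comp x hh
  have hsymm := second_derivative_symmetric_of_eventually hevg hD a b
  simp only [ContinuousLinearMap.coe_comp', Function.comp_apply,
    ContinuousLinearMap.smul_apply, ContinuousLinearMap.sub_apply,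
    ContinuousLinearMap.coe_id', id_eq, innerSL_apply_apply] at hsymm
  have e1 : ⟪(2:ℝ) • (a - A a), b⟫ = 2 * (⟪a, b⟫ - ⟪A a, b⟫) := by
    rw [real_inner_smul_left, inner_sub_left]
  have e2 : ⟪(2:ℝ) • (b - A b), a⟫ = 2 * (⟪b, a⟫ - ⟪A b, a⟫) := by
    rw [real_inner_smul_left, inner_sub_left]
  rw [e1, e2] at hsymm
  have hba : ⟪b, a⟫ = ⟪a, b⟫ := real_inner_comm _ _
  have hAb : ⟪A b, a⟫ = ⟪a, A b⟫ := real_inner_comm _ _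
  linarith [hsymm]

theorem proj_normal_eq (hV : IsOpen V) (hp : ContDiffOn ℝ 1 p V) (hP : ProjHyp N V p)
    {x₀ : E} {ρ M : ℝ} (hρpos : 0 < ρ)
    (hmem : ∀ y : E, ‖y - x₀‖ ≤ ρ → y ∈ V)
    (hM : ∀ y : E, ‖y - x₀‖ ≤ ρ → ‖fderiv ℝ p y‖ ≤ M)
    {x : E} (hxN : x ∈ N) (hxb : ‖x - x₀‖ ≤ ρ/8)
    {v : E} (hvorth : ∀ w ∈ tangentConeAt ℝ N x, ⟪v, w⟫ = (0:ℝ))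
    (hvlt : ‖v‖ < ρ/8) : p (x + v) = x := by
  have hxV : x ∈ V := hmem x (by linarith)
  have hpx : p x = x := hP.proj_self hxN hxV
  rcases eq_or_ne v 0 with rfl | hv0
  · simpa using hpx
  have hvpos : 0 < ‖v‖ := norm_pos_iff.2 hv0
  set u := ‖v‖⁻¹ • v with hu
  have hun : ‖u‖ = 1 := by
    rw [hu, norm_smul, Real.norm_eq_abs, abs_of_pos (inv_pos.2 hvpos), inv_mul_cancel₀ hvpos.ne']
  -- parameter sequence T n → 0⁺
  set T : ℕ → ℝ := fun n => (ρ/8) * ((n:ℝ)+1)⁻¹ with hT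
  have hTpos : ∀ n, 0 < T n := fun n => by rw [hT]; positivity
  have hTle : ∀ n, T n ≤ ρ/8 := by
    intro n
    rw [hT]
    have h1 : (1:ℝ) ≤ (n:ℝ) + 1 := by
      have : (0:ℝ) ≤ (n:ℝ) := Nat.cast_nonneg n
      linarith
    have h2 : ((n:ℝ)+1)⁻¹ ≤ 1 := inv_le_one_of_one_le₀ h1
    calc (ρ/8) * ((n:ℝ)+1)⁻¹ ≤ (ρ/8) * 1 := by
          exact mul_le_mul_of_nonneg_left h2 (by positivity)
      _ = ρ/8 := mul_one _
  have hn1 : Tendsto (fun n : ℕ => ((n:ℝ) + 1)) atTop atTop :=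
    tendsto_atTop_add_const_right atTop 1 tendsto_natCast_atTop_atTop
  have hinv : Tendsto (fun n : ℕ => ((n:ℝ)+1)⁻¹) atTop (𝓝 0) := hn1.inv_tendsto_atTop
  have hT0 : Tendsto T atTop (𝓝 0) := by
    have := hinv.const_mul (ρ/8)
    simpa [hT] using this
  have hTne : Tendsto T atTop (𝓝[≠] (0:ℝ)) := by
    apply tendsto_nhdsWithin_of_tendsto_nhds_of_eventually_within _ hT0
    exact Filter.Eventually.of_forall fun n => by simpa using (hTpos n).ne'
  -- the curve F
  set F : ℝ → E := fun t => p (x + t • u) with hF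
  set ζ := fderiv ℝ p x u with hζ
  have hFd : HasDerivAt F ζ 0 := by
    have hd : DifferentiableAt ℝ p x :=
      (hp.differentiableOn one_ne_zero).differentiableAt (hV.mem_nhds hxV)
    have hd' : HasFDerivAt p (fderiv ℝ p x) (x + (0:ℝ) • u) := by simpa using hd.hasFDerivAt
    have hc : HasDerivAt (fun t : ℝ => x + t • u) u 0 := by
      simpa using ((hasDerivAt_id (0:ℝ)).smul_const u).const_add x
    exact hd'.comp_hasDerivAt 0 hc
  have hF0 : F 0 = x := by rw [hF]; simpa using hpx
  have hslope : Tendsto (fun t : ℝ => t⁻¹ • (F t - x)) (𝓝[≠] (0:ℝ)) (𝓝 ζ) := by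
    have h0 := hasDerivAt_iff_tendsto_slope.1 hFd
    apply h0.congr
    intro t
    rw [slope_def_module, hF0, sub_zero]
  have hslopeT : Tendsto (fun n => (T n)⁻¹ • (F (T n) - x)) atTop (𝓝 ζ) :=
    hslope.comp hTne
  -- points on the ray are in V
  have hyVn : ∀ n, x + T n • u ∈ V := by
    intro n
    apply hmem
    have e1 : x + T n • u - x₀ = (x - x₀) + T n • u := by abel
    have e2 : ‖T n • u‖ = T n := by
      rw [norm_smul, hun, Real.norm_eq_abs, abs_of_pos (hTpos n), mul_one]
    have := norm_add_le (x - x₀) (T n • u)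
    rw [← e1, e2] at this
    have := hTle n
    linarith
  have hFN : ∀ n, F (T n) ∈ N := fun n => (hP _ (hyVn n)).1
  -- distance bound : rr n ≤ T n
  set rr : ℕ → ℝ := fun n => ‖(x + T n • u) - F (T n)‖ with hrr
  have hinf' : ∀ n, rr n ≤ T n := by
    intro n
    have h1 := (hP _ (hyVn n)).2.1
    have h2 : Metric.infDist (x + T n • u) N ≤ T n := by
      have h3 := Metric.infDist_le_dist_of_mem (x := x + T n • u) hxN
      rw [dist_eq_norm] at h3
      have e : x + T n • u - x = T n • u := by abel
      rw [e, norm_smul, hun, Real.norm_eq_abs, abs_of_pos (hTpos n), mul_one] at h3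
      exact h3
    calc rr n = Metric.infDist (x + T n • u) N := h1
      _ ≤ T n := h2
  -- ζ ∈ tangent cone
  have hζcone : ζ ∈ tangentConeAt ℝ N x := by
    refine mem_tangentConeAt_of_seq atTop (fun n => (T n)⁻¹) (fun n => F (T n) - x) ?_
      (Filter.Eventually.of_forall fun n => by simpa using hFN n) hslopeT
    have h1 := hT0.smul hslopeT
    have h2 : Tendsto (fun n => T n • ((T n)⁻¹ • (F (T n) - x))) atTop (𝓝 0) := by
      simpa using h1
    exact h2.congr fun n => smul_inv_smul₀ (hTpos n).ne' _
  have hinner0 : ⟪u, ζ⟫ = 0 := by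
    have h0 := hvorth ζ hζcone
    rw [hu, real_inner_smul_left, h0, mul_zero]
  have hbound : ∀ n, ‖u - (T n)⁻¹ • (F (T n) - x)‖ ≤ 1 := by
    intro n
    have heq2 : u - (T n)⁻¹ • (F (T n) - x) = (T n)⁻¹ • ((x + T n • u) - F (T n)) := by
      have h4 : (T n)⁻¹ • ((x + T n • u) - F (T n))
          = (T n)⁻¹ • (T n • u) - (T n)⁻¹ • (F (T n) - x) := by
        rw [← smul_sub]; congr 1; abel
      rw [h4, inv_smul_smul₀ (hTpos n).ne']
    rw [heq2, norm_smul, Real.norm_eq_abs, abs_of_pos (inv_pos.2 (hTpos n))]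
    calc (T n)⁻¹ * ‖(x + T n • u) - F (T n)‖ ≤ (T n)⁻¹ * T n :=
          mul_le_mul_of_nonneg_left (hinf' n) (by positivity)
      _ = 1 := inv_mul_cancel₀ (hTpos n).ne'
  have hle1 : ‖u - ζ‖ ≤ 1 := by
    have hcont : Tendsto (fun n => ‖u - (T n)⁻¹ • (F (T n) - x)‖) atTop (𝓝 ‖u - ζ‖) :=
      (tendsto_const_nhds.sub hslopeT).norm
    exact le_of_tendsto hcont (Filter.Eventually.of_forall hbound)
  have hζ0 : ζ = 0 := by
    have hsq : ‖u - ζ‖^2 = 1 - 2 * ⟪u, ζ⟫ + ‖ζ‖^2 := by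
      rw [norm_sub_sq_real, hun]; ring
    have h1 : ‖u - ζ‖^2 ≤ 1 := by nlinarith [norm_nonneg (u - ζ), hle1]
    have h2 : ‖ζ‖^2 ≤ 0 := by rw [hsq, hinner0] at h1; linarith
    have h3 : ‖ζ‖ = 0 := by nlinarith [norm_nonneg ζ]
    exact norm_eq_zero.1 h3
  have hw0 : Tendsto (fun n => (T n)⁻¹ • (F (T n) - x)) atTop (𝓝 0) := by
    rw [hζ0] at hslopeT; exact hslopeT
  have he0 : Tendsto (fun n => F (T n) - x) atTop (𝓝 0) := by
    have h1 := hT0.smul hw0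
    have h2 : Tendsto (fun n => T n • ((T n)⁻¹ • (F (T n) - x))) atTop (𝓝 0) := by
      simpa using h1
    exact h2.congr fun n => smul_inv_smul₀ (hTpos n).ne' _
  have hfactor : Tendsto (fun n => ‖u - (T n)⁻¹ • (F (T n) - x)‖) atTop (𝓝 1) := by
    have h1 : Tendsto (fun n => u - (T n)⁻¹ • (F (T n) - x)) atTop (𝓝 (u - 0)) :=
      (tendsto_const_nhds (x := u)).sub hw0
    have h2 := h1.norm
    simpa [hun] using h2
  have hrr_dec : ∀ n, (x + T n • u) - F (T n) = T n • (u - (T n)⁻¹ • (F (T n) - x)) := by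
    intro n
    rw [smul_sub, smul_inv_smul₀ (hTpos n).ne']; abel
  have hrr_eq : ∀ n, rr n = T n * ‖u - (T n)⁻¹ • (F (T n) - x)‖ := by
    intro n
    rw [hrr]
    simp only
    rw [hrr_dec n, norm_smul, Real.norm_eq_abs, abs_of_pos (hTpos n)]
  have hev_half : ∀ᶠ n in atTop, (1:ℝ)/2 < ‖u - (T n)⁻¹ • (F (T n) - x)‖ :=
    hfactor.eventually_const_lt (by norm_num)
  -- the extension step
  have hext : ∀ᶠ n in atTop,
      p (F (T n) + (ρ/8) • ((rr n)⁻¹ • ((x + T n • u) - F (T n)))) = F (T n) := by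
    filter_upwards [hev_half] with n hhalf
    have hrpos : 0 < rr n := by
      rw [hrr_eq n]; exact mul_pos (hTpos n) (by linarith)
    set ν := (rr n)⁻¹ • ((x + T n • u) - F (T n)) with hν
    have hνn : ‖ν‖ = 1 := by
      rw [hν, norm_smul, Real.norm_eq_abs, abs_of_pos (inv_pos.2 hrpos)]
      exact inv_mul_cancel₀ hrpos.ne'
    have hbase' : F (T n) + rr n • ν = x + T n • u := by
      rw [hν, smul_inv_smul₀ hrpos.ne']; abel
    have hzb : ‖F (T n) - x₀‖ ≤ 3*ρ/8 := by
      have h1 : ‖F (T n) - x‖ ≤ rr n + T n := by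
        have e : F (T n) - x = -((x + T n • u) - F (T n)) + T n • u := by abel
        rw [e]
        have e2 : ‖T n • u‖ = T n := by
          rw [norm_smul, hun, Real.norm_eq_abs, abs_of_pos (hTpos n), mul_one]
        calc ‖-((x + T n • u) - F (T n)) + T n • u‖
            ≤ ‖-((x + T n • u) - F (T n))‖ + ‖T n • u‖ := norm_add_le _ _
          _ = rr n + T n := by rw [norm_neg, e2]
      have e3 : F (T n) - x₀ = (F (T n) - x) + (x - x₀) := by abel
      have h4 := norm_add_le (F (T n) - x) (x - x₀)
      rw [← e3] at h4
      have h5 := hinf' n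
      have h6 := hTle n
      linarith
    have hrayV : ∀ s ∈ Icc (rr n) (ρ/8), F (T n) + s • ν ∈ V := by
      intro s hs
      apply hmem
      have hs0 : 0 ≤ s := le_trans hrpos.le hs.1
      have e : F (T n) + s • ν - x₀ = (F (T n) - x₀) + s • ν := by abel
      have h7 := norm_add_le (F (T n) - x₀) (s • ν)
      rw [← e] at h7
      have e2 : ‖s • ν‖ = s := by
        rw [norm_smul, hνn, Real.norm_eq_abs, abs_of_nonneg hs0, mul_one]
      rw [e2] at h7
      have := hs.2
      linarith
    have hγbound : ∀ s ∈ Icc (rr n) (ρ/8), ‖F (T n) + s • ν - x₀‖ ≤ ρ/2 := by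
      intro s hs
      have hs0 : 0 ≤ s := le_trans hrpos.le hs.1
      have e : F (T n) + s • ν - x₀ = (F (T n) - x₀) + s • ν := by abel
      have h7 := norm_add_le (F (T n) - x₀) (s • ν)
      rw [← e] at h7
      have e2 : ‖s • ν‖ = s := by
        rw [norm_smul, hνn, Real.norm_eq_abs, abs_of_nonneg hs0, mul_one]
      rw [e2] at h7
      have := hs.2
      linarith
    have hsegV : ∀ s ∈ Icc (rr n) (ρ/8), ∀ σ ∈ Icc (0:ℝ) 1,
        p (F (T n) + s • ν) + σ • ((F (T n) + s • ν) - p (F (T n) + s • ν)) ∈ V := by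
      intro s hs σ hσ
      set γp := F (T n) + s • ν with hγp
      have hγV : γp ∈ V := hrayV s hs
      have hs0 : 0 ≤ s := le_trans hrpos.le hs.1
      have hpd : ‖γp - p γp‖ ≤ s := by
        have h1 := (hP _ hγV).2.1
        have h2 := Metric.infDist_le_dist_of_mem (x := γp) (hFN n)
        rw [dist_eq_norm] at h2
        have e : γp - F (T n) = s • ν := by rw [hγp]; abel
        rw [e, norm_smul, hνn, Real.norm_eq_abs, abs_of_nonneg hs0, mul_one] at h2
        rw [h1]; exact h2
      apply hmem
      have e : p γp + σ • (γp - p γp) - x₀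
          = (γp - x₀) + (σ - 1) • (γp - p γp) := by module
      have h8 := norm_add_le (γp - x₀) ((σ - 1) • (γp - p γp))
      rw [← e] at h8
      have h9 : ‖(σ - 1) • (γp - p γp)‖ ≤ s := by
        rw [norm_smul, Real.norm_eq_abs, abs_of_nonpos (by linarith [hσ.2])]
        have h10 : -(σ - 1) ≤ 1 := by linarith [hσ.1]
        calc -(σ - 1) * ‖γp - p γp‖ ≤ 1 * ‖γp - p γp‖ :=
              mul_le_mul_of_nonneg_right h10 (norm_nonneg _)
          _ = ‖γp - p γp‖ := one_mul _
          _ ≤ s := hpd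
      have h11 := hγbound s hs
      have h12 := hs.2
      linarith
    have hMn : ∀ s ∈ Icc (rr n) (ρ/8), ‖fderiv ℝ p (F (T n) + s • ν)‖ ≤ M := by
      intro s hs
      exact hM _ (le_trans (hγbound s hs) (by linarith))
    have hray := ray_extension hV hp hP hrpos (le_trans (hinf' n) (hTle n))
        (by rw [hbase']) hrayV hsegV hMn (ρ/8) ⟨le_trans (hinf' n) (hTle n), le_rfl⟩
    exact hray
  -- pass to the limit
  have hzlim : Tendsto (fun n => F (T n)) atTop (𝓝 x) := by
    have h1 : Tendsto (fun n => (F (T n) - x) + x) atTop (𝓝 (0 + x)) :=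
      he0.add tendsto_const_nhds
    simpa using h1
  have hνlim : Tendsto (fun n => (rr n)⁻¹ • ((x + T n • u) - F (T n))) atTop (𝓝 u) := by
    have h1 : Tendsto (fun n => ‖u - (T n)⁻¹ • (F (T n) - x)‖⁻¹
        • (u - (T n)⁻¹ • (F (T n) - x))) atTop (𝓝 ((1:ℝ)⁻¹ • (u - 0))) :=
      (hfactor.inv₀ one_ne_zero).smul ((tendsto_const_nhds (x := u)).sub hw0)
    have h2 : Tendsto (fun n => ‖u - (T n)⁻¹ • (F (T n) - x)‖⁻¹
        • (u - (T n)⁻¹ • (F (T n) - x))) atTop (𝓝 u) := by simpa using h1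
    apply h2.congr
    intro n
    have hne : T n ≠ 0 := (hTpos n).ne'
    rw [hrr_eq n, hrr_dec n, smul_smul]
    congr 1
    have harith : ∀ (c X : ℝ), c ≠ 0 → X⁻¹ = (c * X)⁻¹ * c := by
      intro c X hc
      rcases eq_or_ne X 0 with h | h
      · simp [h]
      · field_simp
    exact harith (T n) _ hne
  have hclim : Tendsto (fun n => F (T n) + (ρ/8) • ((rr n)⁻¹ • ((x + T n • u) - F (T n))))
      atTop (𝓝 (x + (ρ/8) • u)) :=
    hzlim.add (hνlim.const_smul (ρ/8))
  set cpt := x + (ρ/8) • u with hcpt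
  have hcV : cpt ∈ V := by
    apply hmem
    have e : cpt - x₀ = (x - x₀) + (ρ/8) • u := by rw [hcpt]; abel
    have h1 := norm_add_le (x - x₀) ((ρ/8) • u)
    rw [← e] at h1
    have e2 : ‖(ρ/8) • u‖ = ρ/8 := by
      rw [norm_smul, hun, Real.norm_eq_abs, abs_of_pos (by linarith : (0:ℝ) < ρ/8), mul_one]
    rw [e2] at h1
    linarith
  have hpcontc : ContinuousAt p cpt := hp.continuousOn.continuousAt (hV.mem_nhds hcV)
  have hpc : p cpt = x := by
    have t1 : Tendsto (fun n => p (F (T n) + (ρ/8) • ((rr n)⁻¹ • ((x + T n • u) - F (T n)))))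
        atTop (𝓝 (p cpt)) := hpcontc.tendsto.comp hclim
    have t2 : Tendsto (fun n => p (F (T n) + (ρ/8) • ((rr n)⁻¹ • ((x + T n • u) - F (T n)))))
        atTop (𝓝 x) := Tendsto.congr' (hext.mono fun n h => h.symm) hzlim
    exact tendsto_nhds_unique t1 t2
  -- final segment step
  have hsIcc : ‖v‖ / (ρ/8) ∈ Icc (0:ℝ) 1 := by
    constructor
    · positivity
    · rw [div_le_one (by linarith : (0:ℝ) < ρ/8)]; linarith
  have hwpt : p cpt + (‖v‖/(ρ/8)) • (cpt - p cpt) = x + v := by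
    rw [hpc, hcpt]
    have h1 : x + (ρ/8) • u - x = (ρ/8) • u := by abel
    rw [h1, smul_smul]
    have h2 : ‖v‖/(ρ/8) * (ρ/8) = ‖v‖ := div_mul_cancel₀ _ (by linarith : (ρ:ℝ)/8 ≠ 0)
    rw [h2, hu, smul_smul, mul_inv_cancel₀ hvpos.ne', one_smul]
  have hwV : p cpt + (‖v‖/(ρ/8)) • (cpt - p cpt) ∈ V := by
    rw [hwpt]
    apply hmem
    have e : x + v - x₀ = (x - x₀) + v := by abel
    have h1 := norm_add_le (x - x₀) v
    rw [← e] at h1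
    linarith
  have hfin := hP.segment_proj hcV hsIcc hwV
  rw [hwpt, hpc] at hfin
  exact hfin

end Helpers

section MainProof

variable {E : Type*} [NormedAddCommGroup E] [InnerProductSpace ℝ E]

theorem tubular_main {N V : Set E} {p : E → E}
    [FiniteDimensional ℝ E]
    (hNne : N.Nonempty) {x₀ : E} (hx₀ : x₀ ∈ N)
    (hclosed : ∃ r₁ : ℝ, 0 < r₁ ∧ IsClosed (Metric.closedBall x₀ r₁ ∩ N))
    (hVopen : IsOpen V) (hx₀V : x₀ ∈ V)
    (hP : ProjHyp N V p) (hp : ContDiffOn ℝ 1 p V) :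
    ∃ R₀ : ℝ, 0 < R₀ ∧ ∃ δ₀ : ℝ, 0 < δ₀ ∧
      ∀ R : ℝ, 0 < R → R ≤ R₀ → ∀ δ : ℝ, 0 < δ → δ ≤ δ₀ →
        closure {y | ∃ x ∈ Metric.closedBall x₀ R ∩ N, ∃ v : E,
            (∀ w ∈ tangentConeAt ℝ N x, ⟪v, w⟫ = (0:ℝ)) ∧ ‖v‖ < δ ∧ y = x + v} ⊆ V ∧
        {y | ∃ x ∈ Metric.closedBall x₀ R ∩ N, ∃ v : E,
            (∀ w ∈ tangentConeAt ℝ N x, ⟪v, w⟫ = (0:ℝ)) ∧ ‖v‖ < δ ∧ y = x + v} =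
          {x | Metric.infDist x N = Metric.infDist x (Metric.closedBall x₀ R ∩ N) ∧
            Metric.infDist x N < δ} ∧
        ∀ x ∈ Metric.closedBall x₀ R ∩ N, ∀ v : E,
          (∀ w ∈ tangentConeAt ℝ N x, ⟪v, w⟫ = (0:ℝ)) → ‖v‖ < δ → p (x + v) = x := by
  obtain ⟨r₁, hr₁pos, hr₁closed⟩ := hclosed
  obtain ⟨ρ0, hρ0pos, hρ0V⟩ : ∃ ρ0 > 0, Metric.closedBall x₀ ρ0 ⊆ V := by
    rcases Metric.mem_nhds_iff.1 (hVopen.mem_nhds hx₀V) with ⟨ε, hε, hball⟩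
    exact ⟨ε/2, by linarith, subset_trans (Metric.closedBall_subset_ball (by linarith)) hball⟩
  set ρ := min ρ0 r₁ with hρdef
  have hρpos : 0 < ρ := lt_min hρ0pos hr₁pos
  have hρV : Metric.closedBall x₀ ρ ⊆ V :=
    subset_trans (Metric.closedBall_subset_closedBall (min_le_left _ _)) hρ0V
  have hρr₁ : ρ ≤ r₁ := min_le_right _ _
  have hmem : ∀ y : E, ‖y - x₀‖ ≤ ρ → y ∈ V := by
    intro y hy
    exact hρV (by rwa [Metric.mem_closedBall, dist_eq_norm])
  have hfc : ContinuousOn (fun y => fderiv ℝ p y) V :=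
    hp.continuousOn_fderiv_of_isOpen hVopen le_rfl
  obtain ⟨M, hMb⟩ := (isCompact_closedBall x₀ ρ).exists_bound_of_continuousOn (hfc.mono hρV)
  have hM : ∀ y : E, ‖y - x₀‖ ≤ ρ → ‖fderiv ℝ p y‖ ≤ M := by
    intro y hy
    exact hMb y (by rwa [Metric.mem_closedBall, dist_eq_norm])
  refine ⟨ρ/8, by linarith, ρ/8, by linarith, ?_⟩
  intro R hR hRle δ hδ hδle
  -- part (iii)
  have key3 : ∀ x ∈ Metric.closedBall x₀ R ∩ N, ∀ v : E,
      (∀ w ∈ tangentConeAt ℝ N x, ⟪v, w⟫ = (0:ℝ)) → ‖v‖ < δ → p (x + v) = x := by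
    intro x hx v hvorth hvlt
    have hxb : ‖x - x₀‖ ≤ ρ/8 := by
      have := hx.1
      rw [Metric.mem_closedBall, dist_eq_norm] at this
      linarith
    exact proj_normal_eq hVopen hp hP hρpos hmem hM hx.2 hxb hvorth (by linarith)
  -- some ball memberships
  have hballmem : ∀ x : E, x ∈ Metric.closedBall x₀ R → ‖x - x₀‖ ≤ ρ/8 := by
    intro x hx
    rw [Metric.mem_closedBall, dist_eq_norm] at hx
    linarith
  refine ⟨?_, ?_, key3⟩
  -- part (i)
  · have hsub : {y | ∃ x ∈ Metric.closedBall x₀ R ∩ N, ∃ v : E,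
        (∀ w ∈ tangentConeAt ℝ N x, ⟪v, w⟫ = (0:ℝ)) ∧ ‖v‖ < δ ∧ y = x + v}
        ⊆ Metric.closedBall x₀ (ρ/4) := by
      rintro y ⟨x, hx, v, -, hvlt, rfl⟩
      rw [Metric.mem_closedBall, dist_eq_norm]
      have h1 := hballmem x hx.1
      have e : x + v - x₀ = (x - x₀) + v := by abel
      have h2 := norm_add_le (x - x₀) v
      rw [← e] at h2
      linarith
    intro y hy
    have := (closure_minimal hsub Metric.isClosed_closedBall) hy
    exact hρV (Metric.closedBall_subset_closedBall (by linarith) this)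
  -- part (ii)
  · ext y
    constructor
    · rintro ⟨x, hx, v, hvorth, hvlt, rfl⟩
      have hpxv : p (x + v) = x := key3 x hx v hvorth hvlt
      have hyV : x + v ∈ V := by
        apply hmem
        have h1 := hballmem x hx.1
        have e : x + v - x₀ = (x - x₀) + v := by abel
        have h2 := norm_add_le (x - x₀) v
        rw [← e] at h2
        linarith
      have hinfN : Metric.infDist (x + v) N = ‖v‖ := by
        have h1 := (hP _ hyV).2.1
        rw [hpxv] at h1
        rw [← h1]
        congr 1
        abel
      have hge : ‖v‖ ≤ Metric.infDist (x + v) (Metric.closedBall x₀ R ∩ N) := by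
        rw [← hinfN]
        exact Metric.infDist_le_infDist_of_subset inter_subset_right ⟨x, hx⟩
      have hle2 : Metric.infDist (x + v) (Metric.closedBall x₀ R ∩ N) ≤ ‖v‖ := by
        have := Metric.infDist_le_dist_of_mem (x := x + v) hx
        rw [dist_eq_norm] at this
        have e : x + v - x = v := by abel
        rwa [e] at this
      refine ⟨by rw [hinfN]; linarith, by rw [hinfN]; exact hvlt⟩
    · rintro ⟨heq, hlt⟩
      have hRr₁ : R ≤ r₁ := by linarith
      have hBNeq : Metric.closedBall x₀ R ∩ N
          = Metric.closedBall x₀ R ∩ (Metric.closedBall x₀ r₁ ∩ N) := by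
        ext z
        constructor
        · rintro ⟨h1, h2⟩
          exact ⟨h1, Metric.closedBall_subset_closedBall hRr₁ h1, h2⟩
        · rintro ⟨h1, -, h3⟩
          exact ⟨h1, h3⟩
      have hBNclosed : IsClosed (Metric.closedBall x₀ R ∩ N) := by
        rw [hBNeq]
        exact Metric.isClosed_closedBall.inter hr₁closed
      have hBNcompact : IsCompact (Metric.closedBall x₀ R ∩ N) :=
        (isCompact_closedBall x₀ R).of_isClosed_subset hBNclosed inter_subset_left
      have hBNne : (Metric.closedBall x₀ R ∩ N).Nonempty :=
        ⟨x₀, Metric.mem_closedBall_self hR.le, hx₀⟩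
      obtain ⟨x, hxBN, hxd⟩ := hBNcompact.exists_infDist_eq_dist hBNne y
      set v := y - x with hv
      have hvinf : ‖v‖ = Metric.infDist y N := by
        rw [hv, ← dist_eq_norm, ← hxd, ← heq]
      have hvlt' : ‖v‖ < δ := by rw [hvinf]; exact hlt
      have hxb : ‖x - x₀‖ ≤ ρ/8 := hballmem x hxBN.1
      have hxV : x ∈ V := hmem x (by linarith)
      have hyV : y ∈ V := by
        apply hmem
        have e : y - x₀ = v + (x - x₀) := by rw [hv]; abel
        have h2 := norm_add_le v (x - x₀)
        rw [← e] at h2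
        linarith
      have hpy : p y = x := by
        have h1 : ‖y - x‖ = Metric.infDist y N := by rw [← hv, hvinf]
        exact ((hP y hyV).2.2 x hxBN.2 h1).symm
      have horth : ∀ w ∈ tangentConeAt ℝ N x, ⟪v, w⟫ = (0:ℝ) := by
        intro w hw
        have hfix : fderiv ℝ p x w = w := fixed_dir hVopen hp hP hxV hxBN.2 hw
        have hconst : ∀ s ∈ Icc (0:ℝ) 1, p (x + s • v) = p x := by
          intro s hs
          have hpx : p x = x := hP.proj_self hxBN.2 hxV
          have hwmem : p y + s • (y - p y) ∈ V := by
            rw [hpy]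
            apply hmem
            have e : x + s • (y - x) - x₀ = (x - x₀) + s • v := by rw [hv]; abel
            have h2 := norm_add_le (x - x₀) (s • v)
            rw [← e] at h2
            have h3 : ‖s • v‖ = s * ‖v‖ := by
              rw [norm_smul, Real.norm_eq_abs, abs_of_nonneg hs.1]
            have h4 : s * ‖v‖ ≤ ‖v‖ := by
              calc s * ‖v‖ ≤ 1 * ‖v‖ := mul_le_mul_of_nonneg_right hs.2 (norm_nonneg _)
                _ = ‖v‖ := one_mul _
            rw [h3] at h2
            linarith
          have h5 := hP.segment_proj hyV hs hwmem
          rw [hpy] at h5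
          have e2 : x + s • (y - x) = x + s • v := by rw [hv]
          rw [e2] at h5
          rw [h5, hpx]
        have hker : fderiv ℝ p x v = 0 := const_ray_fderiv_zero hVopen hp hxV hconst
        have hsym := symm_fderiv hVopen hp hP hxV v w
        rw [hker, hfix] at hsym
        rw [← hsym]
        exact inner_zero_left w
      exact ⟨x, hxBN, v, horth, hvlt', by rw [hv]; abel⟩

end MainProof

/-- **Local tubular neighbourhoods** (Proposition 2.5).  Let `N ⊆ ℝ^d` be a nonempty
`𝔡`-dimensional `C¹`-submanifold, `𝔡 ∈ {1,…,d−1}`, let `x₀ ∈ N`, assume some closed ball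
around `x₀` intersects `N` in a closed set, and let `V*` be an open neighbourhood of `x₀`
admitting the `C¹` nearest-point projection `p` onto `N`.  Then there are `R₀, δ₀ ∈ (0,∞)`
such that for all `R ∈ (0,R₀]`, `δ ∈ (0,δ₀]`: the closure of `V_{R,δ}(x₀)` lies in `V*`;
`V_{R,δ}(x₀)` coincides with `{x : dd(x,N) = dd(x, closedBall x₀ R ∩ N) < δ}`; and the
projection of `x + v` equals `x` for every `x ∈ closedBall x₀ R ∩ N` and normal `v`, `‖v‖ < δ`. -/
theorem stmt_5 (d 𝔡 : ℕ) (hd : 1 ≤ 𝔡) (h𝔡 : 𝔡 ≤ d - 1)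
    (N : Set (EuclideanSpace ℝ (Fin d))) (hNne : N.Nonempty)
    (hN : IsC1Submanifold d 𝔡 N)
    (x₀ : EuclideanSpace ℝ (Fin d)) (hx₀ : x₀ ∈ N)
    (hclosed : ∃ r₁ : ℝ, 0 < r₁ ∧ IsClosed (Metric.closedBall x₀ r₁ ∩ N))
    (V : Set (EuclideanSpace ℝ (Fin d))) (hVopen : IsOpen V) (hx₀V : x₀ ∈ V)
    (p : EuclideanSpace ℝ (Fin d) → EuclideanSpace ℝ (Fin d))
    (hproj : AdmitsC1Proj N V p) :
    ∃ R₀ : ℝ, 0 < R₀ ∧ ∃ δ₀ : ℝ, 0 < δ₀ ∧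
      ∀ R : ℝ, 0 < R → R ≤ R₀ → ∀ δ : ℝ, 0 < δ → δ ≤ δ₀ →
        closure (VRd N x₀ R δ) ⊆ V ∧
        VRd N x₀ R δ =
          {x | Metric.infDist x N = Metric.infDist x (Metric.closedBall x₀ R ∩ N) ∧
            Metric.infDist x N < δ} ∧
        ∀ x ∈ Metric.closedBall x₀ R ∩ N, ∀ v : EuclideanSpace ℝ (Fin d),
          (∀ w ∈ tangentConeAt ℝ N x, inner ℝ v w = (0 : ℝ)) → ‖v‖ < δ → p (x + v) = x := by
  obtain ⟨hP, hp⟩ := hproj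
  exact tubular_main hNne hx₀ hclosed hVopen hx₀V hP hp
end

section
/- Let d ∈ ℕ, 𝔡 ∈ {0, 1, …, d−1}, let N ⊆ ℝ^d be a nonempty 𝔡-dimensional C^1-submanifold of ℝ^d, let x₀ ∈ N, and assume there exists r₁ > 0 such that (the closed ball of radius r₁ around x₀) ∩ N is a closed subset of ℝ^d. Then there exist R₀, δ₀ ∈ (0, ∞) such that for every R ∈ (0, R₀] and δ ∈ (0, δ₀] it holds that {x ∈ ℝ^d : dd(x, N) < δ and ‖x − x₀‖ ≤ R − δ} ⊆ V_{R,δ}(x₀). -/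
open Filter Topology Asymptotics

section Aux

variable {E F : Type*} [NormedAddCommGroup E] [NormedSpace ℝ E]
  [NormedAddCommGroup F] [NormedSpace ℝ F]

variable {E F : Type*} [NormedAddCommGroup E] [NormedSpace ℝ E]
  [NormedAddCommGroup F] [NormedSpace ℝ F]

/-- Lemma A: tangent cone is contained in the kernel of the derivative of a local defining map. -/
lemma tangentCone_subset_ker {N W : Set E} {Φ : E → F} {y : E}
    (hWopen : IsOpen W) (hyW : y ∈ W) (hΦ : DifferentiableAt ℝ Φ y)
    (hNW : N ∩ W = {z ∈ W | Φ z = 0}) (hyN : y ∈ N)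
    {w : E} (hw : w ∈ tangentConeAt ℝ N y) : fderiv ℝ Φ y w = 0 := by
  obtain ⟨c, dd, hc, hdmem, hcd⟩ := mem_tangentConeAt_iff_exists_seq_norm_tendsto_atTop.1 hw
  set f' := fderiv ℝ Φ y with hf'
  have hΦy : Φ y = 0 := by
    have : y ∈ N ∩ W := ⟨hyN, hyW⟩
    rw [hNW] at this; exact this.2
  have hd0 : Tendsto dd atTop (𝓝 0) := tangentConeAt.lim_zero atTop hc hcd
  -- eventually y + dd n ∈ W
  have hyd : Tendsto (fun n => y + dd n) atTop (𝓝 y) := by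
    have := tendsto_const_nhds.add hd0 (f := fun _ : ℕ => y)
    simpa using this
  have hW : ∀ᶠ n in atTop, y + dd n ∈ W := hyd.eventually (hWopen.mem_nhds hyW)
  have hΦ0 : ∀ᶠ n in atTop, Φ (y + dd n) = 0 := by
    filter_upwards [hW, hdmem] with n h1 h2
    have : y + dd n ∈ N ∩ W := ⟨h2, h1⟩
    rw [hNW] at this; exact this.2
  -- little-o estimate
  have hlo : (fun n => Φ (y + dd n) - Φ y - f' (dd n)) =o[atTop] dd := by
    have h1 : (fun h => Φ (y + h) - Φ y - f' h) =o[𝓝 0] id :=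
      (hasFDerivAt_iff_isLittleO_nhds_zero.1 hΦ.hasFDerivAt)
    exact h1.comp_tendsto hd0
  have hev : ∀ᶠ n in atTop, f' (dd n) = -(Φ (y + dd n) - Φ y - f' (dd n)) := by
    filter_upwards [hΦ0] with n h
    rw [h, hΦy]; simp
  -- c n • (error n) → 0
  have hbd : (fun n => c n • dd n) =O[atTop] (fun _ : ℕ => (1 : ℝ)) :=
    hcd.isBigO_one ℝ
  have hsmul : (fun n => c n • (Φ (y + dd n) - Φ y - f' (dd n))) =o[atTop]
      (fun _ : ℕ => (1 : ℝ)) := by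
    have := (isBigO_refl c atTop).smul_isLittleO hlo
    calc (fun n => c n • (Φ (y + dd n) - Φ y - f' (dd n)))
        =o[atTop] (fun n => c n • dd n) := this
      _ =O[atTop] (fun _ : ℕ => (1 : ℝ)) := hbd
  have hzero : Tendsto (fun n => c n • (Φ (y + dd n) - Φ y - f' (dd n))) atTop (𝓝 0) :=
    isLittleO_one_iff ℝ |>.1 hsmul
  have h1 : Tendsto (fun n => f' (c n • dd n)) atTop (𝓝 (f' w)) :=
    (f'.continuous.tendsto w).comp hcd
  have h2 : Tendsto (fun n => f' (c n • dd n)) atTop (𝓝 0) := by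
    have hev2 : ∀ᶠ n in atTop, -(c n • (Φ (y + dd n) - Φ y - f' (dd n))) =
        f' (c n • dd n) := by
      filter_upwards [hΦ0] with n h
      rw [h, hΦy, map_smul]
      simp
    have hzn : Tendsto (fun n => -(c n • (Φ (y + dd n) - Φ y - f' (dd n))))
        atTop (𝓝 0) := by simpa using hzero.neg
    exact Tendsto.congr' hev2 hzn
  exact tendsto_nhds_unique h1 h2

end Aux

section Aux2

variable {E F : Type*} [NormedAddCommGroup E] [NormedSpace ℝ E] [CompleteSpace E]
  [NormedAddCommGroup F] [NormedSpace ℝ F] [FiniteDimensional ℝ F]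
/-- Lemma B: any kernel vector of the derivative of the defining map is a limit of
`n • d n` with `y + d n ∈ N`. -/
lemma exists_seq_of_ker {N W : Set E} {Φ : E → F} {y : E}
    (hWopen : IsOpen W) (hyW : y ∈ W) (hΦ : ContDiff ℝ 1 Φ)
    (hsurj : Function.Surjective (fderiv ℝ Φ y))
    (hNW : N ∩ W = {z ∈ W | Φ z = 0}) (hyN : y ∈ N)
    {u : E} (hu : fderiv ℝ Φ y u = 0) :
    ∃ d : ℕ → E, (∀ᶠ n in atTop, y + d n ∈ N) ∧
      Tendsto (fun n : ℕ => (n : ℝ) • d n) atTop (𝓝 u) := by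
  set f' := fderiv ℝ Φ y with hf'def
  have hstrict : HasStrictFDerivAt Φ f' y :=
    (hΦ.contDiffAt).hasStrictFDerivAt one_ne_zero
  have hrange : LinearMap.range (f' : E →ₗ[ℝ] F) = ⊤ := LinearMap.range_eq_top.2 hsurj
  set g : F → LinearMap.ker (f' : E →ₗ[ℝ] F) → E := hstrict.implicitFunction Φ f' hrange with hgdef
  have hΦy : Φ y = 0 := by
    have : y ∈ N ∩ W := ⟨hyN, hyW⟩
    rw [hNW] at this; exact this.2
  have hg0 : g (Φ y) 0 = y := hstrict.implicitFunction_apply_image hrange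
  set ub : LinearMap.ker (f' : E →ₗ[ℝ] F) := ⟨u, hu⟩ with hubdef
  -- the curve s ↦ g (Φ y) (s • ub)
  set h : ℝ → E := fun s => g (Φ y) (s • ub) with hhdef
  have hgderiv : HasStrictFDerivAt (g (Φ y)) (LinearMap.ker (f' : E →ₗ[ℝ] F)).subtypeL 0 :=
    hstrict.to_implicitFunction hrange
  have hcurve : HasDerivAt h u 0 := by
    have h1 : HasDerivAt (fun s : ℝ => s • ub) ub 0 := by
      simpa using (hasDerivAt_id (0 : ℝ)).smul_const ub
    have hgd' : HasFDerivAt (g (Φ y)) (LinearMap.ker (f' : E →ₗ[ℝ] F)).subtypeL ((0 : ℝ) • ub) := by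
      simpa using hgderiv.hasFDerivAt
    have := hgd'.comp_hasDerivAt 0 h1
    exact this
  -- sequence d n = h (1/n) - y
  refine ⟨fun n : ℕ => h ((n : ℝ)⁻¹) - y, ?_, ?_⟩
  · -- membership
    have hinv0 : Tendsto (fun n : ℕ => ((n : ℝ)⁻¹)) atTop (𝓝 0) :=
      tendsto_inv_atTop_nhds_zero_nat
    have hsm : Tendsto (fun n : ℕ => ((n : ℝ)⁻¹) • ub) atTop (𝓝 0) := by
      simpa using hinv0.smul_const ub
    have hcontg : Tendsto (fun n : ℕ => h ((n : ℝ)⁻¹)) atTop (𝓝 y) := by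
      have := (hgderiv.continuousAt.tendsto).comp hsm
      rw [hg0] at this
      exact this
    have hWmem : ∀ᶠ n : ℕ in atTop, h ((n : ℝ)⁻¹) ∈ W :=
      hcontg.eventually (hWopen.mem_nhds hyW)
    have hΦeq : ∀ᶠ n : ℕ in atTop, Φ (h ((n : ℝ)⁻¹)) = Φ y := by
      have hev := hstrict.map_implicitFunction_eq hrange
      have htend : Tendsto (fun n : ℕ => (Φ y, ((n : ℝ)⁻¹) • ub)) atTop
          (𝓝 (Φ y, 0)) := tendsto_const_nhds.prodMk_nhds hsm
      exact htend.eventually hev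
    filter_upwards [hWmem, hΦeq] with n h1 h2
    have : h ((n : ℝ)⁻¹) ∈ N ∩ W := by
      rw [hNW]; exact ⟨h1, by rw [h2, hΦy]⟩
    simpa using this.1
  · -- limit
    have hslope : Tendsto (slope h 0) (𝓝[≠] 0) (𝓝 u) :=
      hasDerivAt_iff_tendsto_slope.1 hcurve
    have hinvne : Tendsto (fun n : ℕ => ((n : ℝ)⁻¹)) atTop (𝓝[≠] 0) := by
      apply tendsto_nhdsWithin_of_tendsto_nhds_of_eventually_within _
        tendsto_inv_atTop_nhds_zero_nat
      filter_upwards [eventually_gt_atTop 0] with n hn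
      simp [Set.mem_setOf_eq]
      positivity
    have := hslope.comp hinvne
    have hh0 : h 0 = y := by
      show g (Φ y) ((0 : ℝ) • ub) = y
      rw [zero_smul, hg0]
    have heq : ∀ᶠ n : ℕ in atTop, slope h 0 ((n : ℝ)⁻¹) =
        (n : ℝ) • (h ((n : ℝ)⁻¹) - y) := by
      filter_upwards [eventually_gt_atTop 0] with n hn
      rw [slope_def_module, hh0]
      simp [sub_zero, inv_inv]
    exact (Tendsto.congr' heq this)

end Aux2

section Aux3

variable {E : Type*} [NormedAddCommGroup E] [InnerProductSpace ℝ E]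
/-- Lemma C: first-order optimality at a locally nearest point. -/
lemma inner_nonpos_of_localmin {N : Set E} {x y : E} {ε : ℝ} (hε : 0 < ε)
    (hmin : ∀ z ∈ N, dist z y < ε → dist x y ≤ dist x z)
    {u : E} {d : ℕ → E} (hdmem : ∀ᶠ n in atTop, y + d n ∈ N)
    (hlim : Tendsto (fun n : ℕ => (n : ℝ) • d n) atTop (𝓝 u)) :
    inner ℝ (x - y) u ≤ (0 : ℝ) := by
  have hc : Tendsto (fun n : ℕ => ‖(n : ℝ)‖) atTop atTop := by
    simp only [Real.norm_natCast]
    exact tendsto_natCast_atTop_atTop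
  have hd0 : Tendsto d atTop (𝓝 0) := tangentConeAt.lim_zero atTop hc hlim
  have hsmall : ∀ᶠ n in atTop, ‖d n‖ < ε := by
    have := hd0.eventually (Metric.ball_mem_nhds (0 : E) hε)
    filter_upwards [this] with n hn
    simpa [dist_eq_norm] using hn
  -- basic inequality: 2⟪x-y, d n⟫ ≤ ‖d n‖²
  have hkey : ∀ᶠ n in atTop, 2 * inner ℝ (x - y) (d n) ≤ ‖d n‖ ^ 2 := by
    filter_upwards [hdmem, hsmall] with n h1 h2
    have hd : dist (y + d n) y < ε := by
      simpa [dist_eq_norm] using h2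
    have := hmin _ h1 hd
    have hsq : ‖x - y‖ ^ 2 ≤ ‖x - (y + d n)‖ ^ 2 := by
      have h0 : (0:ℝ) ≤ dist x (y + d n) := dist_nonneg
      rw [dist_eq_norm, dist_eq_norm] at this
      nlinarith [norm_nonneg (x - y), norm_nonneg (x - (y + d n))]
    have hexp : ‖x - (y + d n)‖ ^ 2 =
        ‖x - y‖ ^ 2 - 2 * inner ℝ (x - y) (d n) + ‖d n‖ ^ 2 := by
      have : x - (y + d n) = (x - y) - d n := by abel
      rw [this, norm_sub_sq_real]
    nlinarith [hsq, hexp]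
  -- multiply by n and pass to the limit
  have hineq : ∀ᶠ n : ℕ in atTop, 2 * (inner ℝ (x - y) ((n : ℝ) • d n) : ℝ) ≤
      ‖(n : ℝ) • d n‖ * ‖d n‖ := by
    filter_upwards [hkey] with n h
    have hn0 : (0:ℝ) ≤ (n : ℝ) := Nat.cast_nonneg n
    rw [real_inner_smul_right, norm_smul, Real.norm_natCast]
    calc 2 * ((n:ℝ) * inner ℝ (x - y) (d n)) = (n:ℝ) * (2 * inner ℝ (x - y) (d n)) := by ring
      _ ≤ (n:ℝ) * ‖d n‖ ^ 2 := by
          exact mul_le_mul_of_nonneg_left h hn0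
      _ = (n:ℝ) * ‖d n‖ * ‖d n‖ := by ring
  have hL : Tendsto (fun n : ℕ => 2 * (inner ℝ (x - y) ((n : ℝ) • d n) : ℝ)) atTop
      (𝓝 (2 * (inner ℝ (x - y) u : ℝ))) :=
    ((tendsto_const_nhds (x := x - y)).inner hlim).const_mul 2
  have hR : Tendsto (fun n : ℕ => ‖(n : ℝ) • d n‖ * ‖d n‖) atTop (𝓝 0) := by
    have h1 : Tendsto (fun n : ℕ => ‖(n : ℝ) • d n‖) atTop (𝓝 ‖u‖) := hlim.norm
    have h2 : Tendsto (fun n : ℕ => ‖d n‖) atTop (𝓝 0) := by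
      simpa using hd0.norm
    simpa using h1.mul h2
  have hfin : 2 * (inner ℝ (x - y) u : ℝ) ≤ 0 := le_of_tendsto_of_tendsto hL hR hineq
  linarith

end Aux3

/-- **Sufficient condition for membership in a tubular neighbourhood** (Lemma 5.7).  Let
`N ⊆ ℝ^d` be a nonempty `𝔡`-dimensional `C¹`-submanifold, `𝔡 ∈ {0,1,…,d−1}`, let `x₀ ∈ N`,
and assume that some closed ball around `x₀` intersects `N` in a closed set.  Then there are
`R₀, δ₀ ∈ (0,∞)` such that for every `R ∈ (0,R₀]` and `δ ∈ (0,δ₀]` it holds that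
`{x : dd(x,N) < δ and ‖x − x₀‖ ≤ R − δ} ⊆ V_{R,δ}(x₀)`. -/
theorem stmt_6 (d 𝔡 : ℕ) (hd : 1 ≤ d) (h𝔡 : 𝔡 ≤ d - 1)
    (N : Set (EuclideanSpace ℝ (Fin d))) (hNne : N.Nonempty)
    (hN : IsC1Submanifold d 𝔡 N)
    (x₀ : EuclideanSpace ℝ (Fin d)) (hx₀ : x₀ ∈ N)
    (hclosed : ∃ r₁ : ℝ, 0 < r₁ ∧ IsClosed (Metric.closedBall x₀ r₁ ∩ N)) :
    ∃ R₀ : ℝ, 0 < R₀ ∧ ∃ δ₀ : ℝ, 0 < δ₀ ∧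
      ∀ R : ℝ, 0 < R → R ≤ R₀ → ∀ δ : ℝ, 0 < δ → δ ≤ δ₀ →
        {x : EuclideanSpace ℝ (Fin d) |
            Metric.infDist x N < δ ∧ ‖x - x₀‖ ≤ R - δ} ⊆ VRd N x₀ R δ := by
  classical
  obtain ⟨r₁, hr₁, hKcl⟩ := hclosed
  refine ⟨r₁ / 2, by positivity, r₁ / 2, by positivity, ?_⟩
  intro R hR hRle δ hδ hδle x hx
  obtain ⟨hdist, hball⟩ := hx
  have hxx₀ : dist x x₀ ≤ R - δ := by rwa [dist_eq_norm]
  have hδR : δ ≤ R := by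
    have := dist_nonneg (x := x) (y := x₀); linarith
  obtain ⟨z, hzN, hzd⟩ := (Metric.infDist_lt_iff hNne).1 hdist
  set K := Metric.closedBall x₀ r₁ ∩ N with hKdef
  have hzK : z ∈ K := by
    refine ⟨Metric.mem_closedBall.2 ?_, hzN⟩
    calc dist z x₀ ≤ dist z x + dist x x₀ := dist_triangle _ _ _
      _ ≤ δ + (R - δ) := by
          have := hzd; rw [dist_comm] at this; linarith
      _ = R := by ring
      _ ≤ r₁ := by linarith
  have hKcomp : IsCompact K :=
    (isCompact_closedBall x₀ r₁).of_isClosed_subset hKcl Set.inter_subset_left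
  obtain ⟨y, hyK, hyd⟩ := hKcomp.exists_infDist_eq_dist ⟨z, hzK⟩ x
  have hxy : dist x y < δ := by
    rw [← hyd]
    exact lt_of_le_of_lt (Metric.infDist_le_dist_of_mem hzK) hzd
  have hyR : dist y x₀ < R := by
    calc dist y x₀ ≤ dist y x + dist x x₀ := dist_triangle _ _ _
      _ < δ + (R - δ) := by
          rw [dist_comm] at hxy; linarith
      _ = R := by ring
  have hε : (0:ℝ) < r₁ - R := by linarith
  have hmin : ∀ z' ∈ N, dist z' y < r₁ - R → dist x y ≤ dist x z' := by
    intro z' hz'N hz'y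
    have hz'K : z' ∈ K := by
      refine ⟨Metric.mem_closedBall.2 ?_, hz'N⟩
      calc dist z' x₀ ≤ dist z' y + dist y x₀ := dist_triangle _ _ _
        _ ≤ (r₁ - R) + R := by linarith
        _ = r₁ := by ring
    rw [← hyd] at *
    exact Metric.infDist_le_dist_of_mem hz'K
  obtain ⟨W, Φ, hWopen, hyW, hΦ, hsurj, hNW⟩ := hN y hyK.2
  refine ⟨y, ⟨Metric.mem_closedBall.2 hyR.le, hyK.2⟩, x - y, ?_, ?_, ?_⟩
  · intro w hw
    have hker : fderiv ℝ Φ y w = 0 :=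
      tangentCone_subset_ker hWopen hyW
        ((hΦ.differentiable one_ne_zero).differentiableAt) hNW hyK.2 hw
    have hker' : fderiv ℝ Φ y (-w) = 0 := by simp [hker]
    obtain ⟨d1, hd1, hl1⟩ :=
      exists_seq_of_ker hWopen hyW hΦ (hsurj y hyW) hNW hyK.2 hker
    obtain ⟨d2, hd2, hl2⟩ :=
      exists_seq_of_ker hWopen hyW hΦ (hsurj y hyW) hNW hyK.2 hker'
    have h1 := inner_nonpos_of_localmin hε hmin hd1 hl1
    have h2 := inner_nonpos_of_localmin hε hmin hd2 hl2
    rw [inner_neg_right] at h2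
    linarith
  · rwa [← dist_eq_norm]
  · abel
end

section
/- Let φ : [0,1] → ℝ be measurable with ∫₀¹ φ(x)² dx < ∞, let f : ℝ⁴ → ℝ be defined by f(θ₁,θ₂,θ₃,θ₄) = ∫₀¹ (θ₃θ₁x + θ₃θ₂ + θ₄ − φ(x))² dx, let r₀ := ∫₀¹ φ(x) dx and r₁ := ∫₀¹ x·φ(x) dx, let U := {θ ∈ ℝ⁴ : θ₃ ≠ 0}, and let 𝓜 := {θ ∈ ℝ⁴ : f(θ) = inf_{ϑ∈ℝ⁴} f(ϑ)}. Then: (i) inf_{θ∈ℝ⁴} f(θ) = inf_{θ∈U} f(θ); (ii) 𝓜 ∩ U = {θ ∈ ℝ⁴ : θ₃ ≠ 0, θ₁θ₃ = 12r₁ − 6r₀, and θ₄ = 4r₀ − 6r₁ − θ₂θ₃}, and this set is nonempty; and (iii) f is twice continuously differentiable on ℝ⁴ and for every θ ∈ 𝓜 ∩ U the Hessian Hess f(θ) has rank 2. -/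
open MeasureTheory

noncomputable section Stmt18Aux

abbrev E4 := EuclideanSpace ℝ (Fin 4)

def fq (c₁ c₂ C : ℝ) (θ : E4) : ℝ :=
  (θ 0 * θ 2) * (θ 0 * θ 2) * (1/3) + (θ 0 * θ 2) * (θ 1 * θ 2 + θ 3)
    + (θ 1 * θ 2 + θ 3) * (θ 1 * θ 2 + θ 3)
    - c₁ * (θ 0 * θ 2) - c₂ * (θ 1 * θ 2 + θ 3) + C

def ga (c₁ : ℝ) (θ : E4) : ℝ := 2/3 * (θ 0 * θ 2) + (θ 1 * θ 2 + θ 3) - c₁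

def gb (c₂ : ℝ) (θ : E4) : ℝ := (θ 0 * θ 2) + 2 * (θ 1 * θ 2 + θ 3) - c₂

def e4 (i : Fin 4) : E4 := EuclideanSpace.single i (1:ℝ)

def gvec (c₁ c₂ : ℝ) (θ : E4) : E4 :=
  (ga c₁ θ * θ 2) • e4 0 + (gb c₂ θ * θ 2) • e4 1
    + (ga c₁ θ * θ 0 + gb c₂ θ * θ 1) • e4 2 + gb c₂ θ • e4 3

lemma hproj (i : Fin 4) (θ : E4) :
    HasFDerivAt (fun θ : E4 => θ i) (EuclideanSpace.proj (𝕜 := ℝ) i) θ :=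
  (EuclideanSpace.proj (𝕜 := ℝ) i).hasFDerivAt

lemma contDiff_fq (c₁ c₂ C : ℝ) : ContDiff ℝ 2 (fq c₁ c₂ C) := by
  have hp : ∀ i : Fin 4, ContDiff ℝ 2 (fun θ : E4 => θ i) := fun i =>
    (EuclideanSpace.proj (𝕜 := ℝ) i).contDiff
  have hA : ContDiff ℝ 2 (fun θ : E4 => θ 0 * θ 2) := (hp 0).mul (hp 2)
  have hB : ContDiff ℝ 2 (fun θ : E4 => θ 1 * θ 2 + θ 3) := ((hp 1).mul (hp 2)).add (hp 3)
  exact (((((hA.mul hA).mul contDiff_const).add (hA.mul hB)).add (hB.mul hB)).sub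
    (contDiff_const.mul hA)).sub (contDiff_const.mul hB) |>.add contDiff_const

lemma hasGradientAt_fq (c₁ c₂ C : ℝ) (θ : E4) :
    HasGradientAt (fq c₁ c₂ C) (gvec c₁ c₂ θ) θ := by
  rw [hasGradientAt_iff_hasFDerivAt]
  have h0 := hproj 0 θ; have h1 := hproj 1 θ; have h2 := hproj 2 θ; have h3 := hproj 3 θ
  have hA := h0.mul h2
  have hB := (h1.mul h2).add h3
  refine (((((hA.mul hA).mul_const (1/3)).add (hA.mul hB)).add (hB.mul hB)).sub
    (hA.const_mul c₁) |>.sub (hB.const_mul c₂) |>.add_const C).congr_fderiv ?_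
  refine ContinuousLinearMap.ext fun v => ?_
  simp only [ContinuousLinearMap.add_apply, ContinuousLinearMap.sub_apply,
    ContinuousLinearMap.smul_apply, smul_eq_mul,
    InnerProductSpace.toDual_apply_apply, gvec, ga, gb, e4, PiLp.inner_apply,
    RCLike.inner_apply, conj_trivial, Fin.sum_univ_four, PiLp.add_apply,
    PiLp.smul_apply, EuclideanSpace.single_apply, Pi.mul_apply, Pi.add_apply]
  simp only [Fin.reduceEq, reduceIte, PiLp.proj_apply]
  ring

lemma gradient_fq (c₁ c₂ C : ℝ) : gradient (fq c₁ c₂ C) = gvec c₁ c₂ :=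
  gradient_eq (hasGradientAt_fq c₁ c₂ C)

def dga (θ : E4) : E4 →L[ℝ] ℝ :=
  (2/3 : ℝ) • (θ 0 • EuclideanSpace.proj (𝕜 := ℝ) 2 + θ 2 • EuclideanSpace.proj (𝕜 := ℝ) 0)
    + (θ 1 • EuclideanSpace.proj (𝕜 := ℝ) 2 + θ 2 • EuclideanSpace.proj (𝕜 := ℝ) 1
        + EuclideanSpace.proj (𝕜 := ℝ) 3)

def dgb (θ : E4) : E4 →L[ℝ] ℝ :=
  (θ 0 • EuclideanSpace.proj (𝕜 := ℝ) 2 + θ 2 • EuclideanSpace.proj (𝕜 := ℝ) 0)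
    + (2 : ℝ) • (θ 1 • EuclideanSpace.proj (𝕜 := ℝ) 2 + θ 2 • EuclideanSpace.proj (𝕜 := ℝ) 1
        + EuclideanSpace.proj (𝕜 := ℝ) 3)

def uvec (θ : E4) : E4 := θ 2 • e4 0 + θ 0 • e4 2

def wvec (θ : E4) : E4 := θ 2 • e4 1 + θ 1 • e4 2 + e4 3

lemma dga_apply (θ v : E4) :
    dga θ v = 2/3 * (θ 0 * v 2 + θ 2 * v 0) + (θ 1 * v 2 + θ 2 * v 1 + v 3) := by
  simp [dga, PiLp.proj_apply]; ring

lemma dgb_apply (θ v : E4) :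
    dgb θ v = (θ 0 * v 2 + θ 2 * v 0) + 2 * (θ 1 * v 2 + θ 2 * v 1 + v 3) := by
  simp [dgb, PiLp.proj_apply]; ring

lemma hess_fq_eq (c₁ c₂ C : ℝ) (θ : E4) (hga : ga c₁ θ = 0) (hgb : gb c₂ θ = 0) :
    hess (fq c₁ c₂ C) θ = (dga θ).smulRight (uvec θ) + (dgb θ).smulRight (wvec θ) := by
  rw [hess, gradient_fq]
  refine HasFDerivAt.fderiv ?_
  have h0 := hproj 0 θ; have h1 := hproj 1 θ; have h2 := hproj 2 θ; have h3 := hproj 3 θ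
  have hA := h0.mul h2
  have hB := (h1.mul h2).add h3
  have hGa := ((hA.const_mul (2/3)).add hB).sub_const c₁
  have hGb := (hA.add (hB.const_mul 2)).sub_const c₂
  refine (((((hGa.mul h2).smul_const (e4 0)).add ((hGb.mul h2).smul_const (e4 1))).add
    (((hGa.mul h0).add (hGb.mul h1)).smul_const (e4 2))).add (hGb.smul_const (e4 3))).congr_fderiv ?_
  refine ContinuousLinearMap.ext fun v => ?_
  have hga' : 2/3 * (θ 0 * θ 2) + (θ 1 * θ 2 + θ 3) - c₁ = 0 := hga
  have hgb' : (θ 0 * θ 2) + 2 * (θ 1 * θ 2 + θ 3) - c₂ = 0 := hgb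
  simp only [ContinuousLinearMap.add_apply, ContinuousLinearMap.smul_apply,
    ContinuousLinearMap.smulRight_apply, ContinuousLinearMap.coe_smul', Pi.smul_apply,
    PiLp.proj_apply, Pi.mul_apply, Pi.add_apply, smul_eq_mul, hga', hgb', zero_mul, zero_smul, zero_add, add_zero,
    dga, dgb, uvec, wvec]
  simp only [smul_add, smul_smul]
  module

lemma rank_hess_fq (c₁ c₂ C : ℝ) (θ : E4) (hθ2 : θ 2 ≠ 0)
    (hga : ga c₁ θ = 0) (hgb : gb c₂ θ = 0) :
    Module.finrank ℝ (LinearMap.range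
      (hess (fq c₁ c₂ C) θ : EuclideanSpace ℝ (Fin 4) →ₗ[ℝ] EuclideanSpace ℝ (Fin 4))) = 2 := by
  have hsp : LinearMap.range
      (hess (fq c₁ c₂ C) θ : EuclideanSpace ℝ (Fin 4) →ₗ[ℝ] EuclideanSpace ℝ (Fin 4))
      = Submodule.span ℝ {uvec θ, wvec θ} := by
    rw [hess_fq_eq c₁ c₂ C θ hga hgb]
    apply le_antisymm
    · rintro x ⟨v, rfl⟩
      simp only [ContinuousLinearMap.add_apply, ContinuousLinearMap.smulRight_apply]
      exact Submodule.add_mem _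
        (Submodule.smul_mem _ _ (Submodule.subset_span (Set.mem_insert _ _)))
        (Submodule.smul_mem _ _ (Submodule.subset_span
          (Set.mem_insert_of_mem _ rfl)))
    · rw [Submodule.span_le]
      rintro x hx
      rcases hx with rfl | rfl
      · refine ⟨(6 / θ 2) • e4 0 + (-3 : ℝ) • e4 3, ?_⟩
        have h1 : dga θ ((6 / θ 2) • e4 0 + (-3 : ℝ) • e4 3) = 1 := by
          rw [dga_apply]
          simp [e4, EuclideanSpace.single_apply]
          field_simp
          ring
        have h2 : dgb θ ((6 / θ 2) • e4 0 + (-3 : ℝ) • e4 3) = 0 := by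
          rw [dgb_apply]
          simp [e4, EuclideanSpace.single_apply]
          field_simp
          ring
        rw [ContinuousLinearMap.coe_coe, ContinuousLinearMap.add_apply, ContinuousLinearMap.smulRight_apply,
          ContinuousLinearMap.smulRight_apply, h1, h2]
        simp
      · refine ⟨(-3 / θ 2) • e4 0 + (2 : ℝ) • e4 3, ?_⟩
        have h1 : dga θ ((-3 / θ 2) • e4 0 + (2 : ℝ) • e4 3) = 0 := by
          rw [dga_apply]
          simp [e4, EuclideanSpace.single_apply]
          field_simp
          ring
        have h2 : dgb θ ((-3 / θ 2) • e4 0 + (2 : ℝ) • e4 3) = 1 := by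
          rw [dgb_apply]
          simp [e4, EuclideanSpace.single_apply]
          field_simp
          ring
        rw [ContinuousLinearMap.coe_coe, ContinuousLinearMap.add_apply, ContinuousLinearMap.smulRight_apply,
          ContinuousLinearMap.smulRight_apply, h1, h2]
        simp
  have hli : LinearIndependent ℝ ![uvec θ, wvec θ] := by
    rw [linearIndependent_fin2]
    constructor
    · intro h
      have h3 := congrArg (fun x : E4 => x 3) h
      simp [wvec, e4, EuclideanSpace.single_apply] at h3
    · intro a h
      have h3 := congrArg (fun x : E4 => x 3) h
      have h0 := congrArg (fun x : E4 => x 0) h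
      simp [uvec, wvec, e4, EuclideanSpace.single_apply] at h3 h0
      exact hθ2 h0.symm
  have hset : ({uvec θ, wvec θ} : Set E4) = Set.range ![uvec θ, wvec θ] := by
    ext x
    simp [Fin.exists_fin_two, eq_comm, or_comm]
  rw [hsp, hset, finrank_span_eq_card hli]
  simp


lemma integral_expand (φ : ℝ → ℝ) (hφmeas : Measurable φ)
    (hφL2 : IntegrableOn (fun x => φ x ^ 2) (Set.Icc (0 : ℝ) 1) volume) (a b : ℝ) :
    ∫ x in Set.Icc (0 : ℝ) 1, (a * x + b - φ x) ^ 2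
      = a ^ 2 / 3 + a * b + b ^ 2 - 2 * a * (∫ x in Set.Icc (0 : ℝ) 1, x * φ x)
        - 2 * b * (∫ x in Set.Icc (0 : ℝ) 1, φ x) + ∫ x in Set.Icc (0 : ℝ) 1, φ x ^ 2 := by
  have hφ2 : Integrable (fun x => φ x ^ 2) (volume.restrict (Set.Icc (0 : ℝ) 1)) := hφL2
  have hφ1 : Integrable φ (volume.restrict (Set.Icc (0 : ℝ) 1)) := by
    refine Integrable.mono' ((integrable_const (1 : ℝ)).add hφ2)
      hφmeas.aestronglyMeasurable (Filter.Eventually.of_forall fun x => ?_)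
    simp only [Pi.add_apply]
    rw [Real.norm_eq_abs]
    nlinarith [sq_nonneg (|φ x| - 1), abs_nonneg (φ x), sq_abs (φ x)]
  have hxφ : Integrable (fun x => x * φ x) (volume.restrict (Set.Icc (0 : ℝ) 1)) := by
    refine Integrable.mono' hφ1.abs
      ((measurable_id.mul hφmeas).aestronglyMeasurable)
      ((ae_restrict_iff' measurableSet_Icc).2 (Filter.Eventually.of_forall fun x hx => ?_))
    rw [Real.norm_eq_abs, abs_mul]
    exact mul_le_of_le_one_left (abs_nonneg _) (abs_le.2 ⟨by linarith [hx.1], hx.2⟩)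
  have hx2 : IntegrableOn (fun x : ℝ => x ^ 2) (Set.Icc (0 : ℝ) 1) volume :=
    (continuous_pow 2).integrableOn_Icc
  have hx1 : IntegrableOn (fun x : ℝ => x) (Set.Icc (0 : ℝ) 1) volume :=
    continuous_id.integrableOn_Icc
  have i2 : ∫ x in Set.Icc (0 : ℝ) 1, x ^ 2 = 1 / 3 := by
    rw [MeasureTheory.integral_Icc_eq_integral_Ioc,
      ← intervalIntegral.integral_of_le zero_le_one, integral_pow]
    norm_num
  have i1 : ∫ x in Set.Icc (0 : ℝ) 1, x = 1 / 2 := by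
    rw [MeasureTheory.integral_Icc_eq_integral_Ioc,
      ← intervalIntegral.integral_of_le zero_le_one, integral_id]
    norm_num
  have key : (fun x => (a * x + b - φ x) ^ 2)
      =ᵐ[volume.restrict (Set.Icc (0 : ℝ) 1)]
      (fun x => (a ^ 2 * x ^ 2 + 2 * a * b * x + b ^ 2)
        - (2 * a * (x * φ x) + 2 * b * φ x) + φ x ^ 2) :=
    Filter.Eventually.of_forall fun x => by ring
  have hpoly : Integrable (fun x : ℝ => a ^ 2 * x ^ 2 + 2 * a * b * x + b ^ 2)
      (volume.restrict (Set.Icc (0 : ℝ) 1)) :=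
    ((hx2.const_mul _).add (hx1.const_mul _)).add (integrable_const _)
  have hmid : Integrable (fun x => 2 * a * (x * φ x) + 2 * b * φ x)
      (volume.restrict (Set.Icc (0 : ℝ) 1)) :=
    (hxφ.const_mul _).add (hφ1.const_mul _)
  have hsub : Integrable (fun x : ℝ => (a ^ 2 * x ^ 2 + 2 * a * b * x + b ^ 2)
      - (2 * a * (x * φ x) + 2 * b * φ x)) (volume.restrict (Set.Icc (0 : ℝ) 1)) :=
    hpoly.sub hmid
  have hp1 : Integrable (fun x : ℝ => a ^ 2 * x ^ 2 + 2 * a * b * x)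
      (volume.restrict (Set.Icc (0 : ℝ) 1)) := (hx2.const_mul _).add (hx1.const_mul _)
  have hm1 : Integrable (fun x : ℝ => 2 * a * (x * φ x) + 2 * b * φ x)
      (volume.restrict (Set.Icc (0 : ℝ) 1)) := (hxφ.const_mul _).add (hφ1.const_mul _)
  rw [MeasureTheory.integral_congr_ae key,
    MeasureTheory.integral_add hsub hφ2,
    MeasureTheory.integral_sub hpoly hmid,
    MeasureTheory.integral_add hp1 (integrable_const _),
    MeasureTheory.integral_add (hx2.const_mul _) (hx1.const_mul _),
    MeasureTheory.integral_add (hxφ.const_mul _) (hφ1.const_mul _),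
    MeasureTheory.integral_const_mul, MeasureTheory.integral_const_mul,
    MeasureTheory.integral_const_mul, MeasureTheory.integral_const_mul,
    i2, i1, MeasureTheory.integral_const]
  simp [Real.volume_Icc]
  ring

end Stmt18Aux

/-- **A four-parameter affine-linear network with linear activation** (Proposition 7.1).  For a
square-integrable target `φ` and the objective
`f(θ) = ∫₀¹ (θ₃θ₁x + θ₃θ₂ + θ₄ − φ(x))² dx`, with `r₀ = ∫₀¹ φ`, `r₁ = ∫₀¹ x·φ(x) dx`,
`U = {θ₃ ≠ 0}` and `𝓜` the set of global minima: the infimum of `f` over `ℝ⁴` equals the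
infimum over `U`; `𝓜 ∩ U` is the nonempty set
`{θ : θ₃ ≠ 0, θ₁θ₃ = 12r₁ − 6r₀, θ₄ = 4r₀ − 6r₁ − θ₂θ₃}`; and `f` is `C²` with Hessian of
rank `2` at every point of `𝓜 ∩ U`. -/
theorem stmt_18 (φ : ℝ → ℝ) (hφmeas : Measurable φ)
    (hφL2 : IntegrableOn (fun x => φ x ^ 2) (Set.Icc (0 : ℝ) 1) volume)
    (f : EuclideanSpace ℝ (Fin 4) → ℝ)
    (hf : ∀ θ : EuclideanSpace ℝ (Fin 4),
      f θ = ∫ x in Set.Icc (0 : ℝ) 1, (θ 2 * θ 0 * x + θ 2 * θ 1 + θ 3 - φ x) ^ 2)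
    (r₀ r₁ : ℝ)
    (hr₀ : r₀ = ∫ x in Set.Icc (0 : ℝ) 1, φ x)
    (hr₁ : r₁ = ∫ x in Set.Icc (0 : ℝ) 1, x * φ x)
    (U : Set (EuclideanSpace ℝ (Fin 4)))
    (hU : U = {θ : EuclideanSpace ℝ (Fin 4) | θ 2 ≠ 0})
    (𝓜 : Set (EuclideanSpace ℝ (Fin 4)))
    (h𝓜 : 𝓜 = {θ | f θ = ⨅ ϑ, f ϑ}) :
    ((⨅ θ : EuclideanSpace ℝ (Fin 4), f θ) = ⨅ θ : U, f θ) ∧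
    (𝓜 ∩ U = {θ : EuclideanSpace ℝ (Fin 4) |
        θ 2 ≠ 0 ∧ θ 0 * θ 2 = 12 * r₁ - 6 * r₀ ∧ θ 3 = 4 * r₀ - 6 * r₁ - θ 1 * θ 2} ∧
      (𝓜 ∩ U).Nonempty) ∧
    (ContDiff ℝ 2 f ∧
      ∀ θ ∈ 𝓜 ∩ U, Module.finrank ℝ (LinearMap.range
        (hess f θ : EuclideanSpace ℝ (Fin 4) →ₗ[ℝ] EuclideanSpace ℝ (Fin 4))) = 2) := by
  have hfF : f = fq (2*r₁) (2*r₀) (∫ x in Set.Icc (0:ℝ) 1, φ x ^ 2) := by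
    funext θ
    have hcg : (fun x => (θ 2 * θ 0 * x + θ 2 * θ 1 + θ 3 - φ x) ^ 2)
        =ᵐ[volume.restrict (Set.Icc (0:ℝ) 1)]
        (fun x => ((θ 0 * θ 2) * x + (θ 1 * θ 2 + θ 3) - φ x) ^ 2) :=
      Filter.Eventually.of_forall fun x => by ring
    rw [hf θ, MeasureTheory.integral_congr_ae hcg, integral_expand φ hφmeas hφL2,
      ← hr₀, ← hr₁]
    simp only [fq]
    ring
  set Cint : ℝ := ∫ x in Set.Icc (0:ℝ) 1, φ x ^ 2 with hCint
  set qf : ℝ → ℝ → ℝ := fun a b =>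
    a * a * (1/3) + a * b + b * b - (2*r₁) * a - (2*r₀) * b + Cint with hqf
  have hfq : ∀ θ : E4, f θ = qf (θ 0 * θ 2) (θ 1 * θ 2 + θ 3) := fun θ => by
    rw [hfF]; rfl
  have hmin : ∀ a b : ℝ, qf (12*r₁-6*r₀) (4*r₀-6*r₁) ≤ qf a b := by
    intro a b
    simp only [hqf]
    nlinarith [sq_nonneg (2*(a-(12*r₁-6*r₀)) + 3*(b-(4*r₀-6*r₁))),
      sq_nonneg (b-(4*r₀-6*r₁))]
  have heqiff : ∀ a b : ℝ, qf a b = qf (12*r₁-6*r₀) (4*r₀-6*r₁)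
      ↔ a = 12*r₁-6*r₀ ∧ b = 4*r₀-6*r₁ := by
    intro a b
    constructor
    · intro h
      simp only [hqf] at h
      have h1 : (b - (4*r₀-6*r₁))^2 ≤ 0 := by
        nlinarith [sq_nonneg (2*(a-(12*r₁-6*r₀)) + 3*(b-(4*r₀-6*r₁)))]
      have hb : b - (4*r₀-6*r₁) = 0 :=
        pow_eq_zero_iff (by norm_num : (2:ℕ) ≠ 0) |>.mp (le_antisymm h1 (sq_nonneg _))
      have h2 : (a - (12*r₁-6*r₀))^2 ≤ 0 := by nlinarith [hb]
      have ha : a - (12*r₁-6*r₀) = 0 :=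
        pow_eq_zero_iff (by norm_num : (2:ℕ) ≠ 0) |>.mp (le_antisymm h2 (sq_nonneg _))
      constructor <;> linarith
    · rintro ⟨ha, hb⟩
      rw [ha, hb]
  set θs : E4 := (WithLp.equiv 2 (Fin 4 → ℝ)).symm ![12*r₁-6*r₀, 0, 1, 4*r₀-6*r₁]
    with hθs
  have hθs0 : θs 0 = 12*r₁-6*r₀ := rfl
  have hθs1 : θs 1 = 0 := rfl
  have hθs2 : θs 2 = 1 := rfl
  have hθs3 : θs 3 = 4*r₀-6*r₁ := rfl
  have hfθs : f θs = qf (12*r₁-6*r₀) (4*r₀-6*r₁) := by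
    rw [hfq θs, hθs0, hθs1, hθs2, hθs3]
    simp only [hqf]
    ring
  have hlb : ∀ θ : E4, qf (12*r₁-6*r₀) (4*r₀-6*r₁) ≤ f θ := fun θ => by
    rw [hfq θ]; exact hmin _ _
  have hbdd : BddBelow (Set.range f) :=
    ⟨qf (12*r₁-6*r₀) (4*r₀-6*r₁), fun x hx => by obtain ⟨θ, rfl⟩ := hx; exact hlb θ⟩
  have hinf : (⨅ θ : E4, f θ) = qf (12*r₁-6*r₀) (4*r₀-6*r₁) :=
    le_antisymm ((ciInf_le hbdd θs).trans_eq hfθs) (le_ciInf hlb)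
  have hθsU : θs ∈ U := by
    rw [hU]
    simp only [Set.mem_setOf_eq, hθs2]
    norm_num
  haveI : Nonempty U := ⟨⟨θs, hθsU⟩⟩
  have hbddU : BddBelow (Set.range fun θ : U => f θ) :=
    ⟨qf (12*r₁-6*r₀) (4*r₀-6*r₁), fun x hx => by obtain ⟨θ, rfl⟩ := hx; exact hlb θ⟩
  have hinfU : (⨅ θ : U, f θ) = qf (12*r₁-6*r₀) (4*r₀-6*r₁) :=
    le_antisymm ((ciInf_le hbddU (⟨θs, hθsU⟩ : U)).trans_eq hfθs) (le_ciInf fun θ => hlb θ)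
  have hθsM : θs ∈ 𝓜 := by
    rw [h𝓜]
    simp only [Set.mem_setOf_eq, hinf]
    exact hfθs
  have hset : 𝓜 ∩ U = {θ : EuclideanSpace ℝ (Fin 4) |
      θ 2 ≠ 0 ∧ θ 0 * θ 2 = 12 * r₁ - 6 * r₀ ∧ θ 3 = 4 * r₀ - 6 * r₁ - θ 1 * θ 2} := by
    ext θ
    simp only [Set.mem_inter_iff, h𝓜, hU, Set.mem_setOf_eq, hinf]
    constructor
    · rintro ⟨hfeq, h2⟩
      rw [hfq θ] at hfeq
      obtain ⟨ha, hb⟩ := (heqiff _ _).mp hfeq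
      exact ⟨h2, by linarith, by linarith⟩
    · rintro ⟨h2, ha, h3⟩
      refine ⟨?_, h2⟩
      rw [hfq θ]
      exact (heqiff _ _).mpr ⟨by linarith, by linarith⟩
  refine ⟨hinf.trans hinfU.symm, ⟨hset, ⟨θs, hθsM, hθsU⟩⟩, ?_, ?_⟩
  · rw [hfF]; exact contDiff_fq _ _ _
  · intro θ hθ
    rw [hset] at hθ
    obtain ⟨h2, ha, h3⟩ := hθ
    rw [hfF]
    refine rank_hess_fq _ _ _ θ h2 ?_ ?_
    · show 2/3 * (θ 0 * θ 2) + (θ 1 * θ 2 + θ 3) - 2*r₁ = 0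
      rw [ha, h3]; ring
    · show (θ 0 * θ 2) + 2 * (θ 1 * θ 2 + θ 3) - 2*r₀ = 0
      rw [ha, h3]; ring
end

section
/- Let f : ℝ² → ℝ be defined by f(θ₁,θ₂) = ∫₀¹ (θ₂·max(θ₁x, 0) − sin(x))² dx, let U := {θ ∈ ℝ² : θ₁ > 0 and θ₂ > 0}, and let 𝓜 := {θ ∈ ℝ² : f(θ) = inf_{ϑ∈ℝ²} f(ϑ)}. Then: (i) 𝓜 ∩ U = {θ ∈ ℝ² : θ₁ > 0, θ₂ > 0, and θ₁θ₂ = 3·(sin(1) − cos(1))}, and this set is nonempty; and (ii) f is twice continuously differentiable on U and for every θ ∈ 𝓜 ∩ U the Hessian Hess f(θ) has rank 1. -/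
open MeasureTheory

noncomputable section StmtAux

abbrev E2 := EuclideanSpace ℝ (Fin 2)

def P (i : Fin 2) : E2 →L[ℝ] ℝ := EuclideanSpace.proj i

def Vv (a c : ℝ) : E2 :=
  a • EuclideanSpace.single 0 (1:ℝ) + c • EuclideanSpace.single 1 (1:ℝ)

def Ggrad (b : ℝ) (ϑ : E2) : E2 := (2*(ϑ 0 * ϑ 1)/3 - 2*b) • Vv (ϑ 1) (ϑ 0)

lemma Vv_apply0 (a c : ℝ) : Vv a c 0 = a := by
  simp [Vv, EuclideanSpace.single_apply]

lemma Vv_apply1 (a c : ℝ) : Vv a c 1 = c := by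
  simp [Vv, EuclideanSpace.single_apply]

/-- The basic integral computation. -/
lemma int1 (c : ℝ) : ∫ x in Set.Icc (0:ℝ) 1, (c*x - Real.sin x)^2
    = c^2/3 - 2*c*(Real.sin 1 - Real.cos 1) + (1/2 - Real.sin 1 * Real.cos 1/2) := by
  have h : ∫ x in Set.Icc (0:ℝ) 1, (c*x - Real.sin x)^2
      = ∫ x in (0:ℝ)..1, (c*x - Real.sin x)^2 := by
    rw [MeasureTheory.integral_Icc_eq_integral_Ioc,
      intervalIntegral.integral_of_le (by norm_num : (0:ℝ) ≤ 1)]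
  rw [h]
  have key := intervalIntegral.integral_eq_sub_of_hasDerivAt
    (f := fun x => c^2*x^3/3 - 2*c*(Real.sin x - x*Real.cos x)
      + (x/2 - Real.sin x * Real.cos x/2))
    (f' := fun x => (c*x - Real.sin x)^2) (a := 0) (b := 1)
    (fun x _ => by
      have h1 : HasDerivAt (fun x : ℝ => c^2*x^3/3) (c^2*x^2) x := by
        have := (hasDerivAt_pow 3 x).const_mul (c^2/3)
        convert this using 1; rfl; rfl; ext y; ring; push_cast; ring
      have h2 : HasDerivAt (fun x : ℝ => Real.sin x - x*Real.cos x) (x * Real.sin x) x := by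
        have := (Real.hasDerivAt_sin x).sub ((hasDerivAt_id x).mul (Real.hasDerivAt_cos x))
        convert this using 1; rfl; rfl; ext y; simp only [id_eq, Pi.sub_apply, Pi.mul_apply]; simp only [id_eq]; ring
      have h3 : HasDerivAt (fun x : ℝ => x/2 - Real.sin x * Real.cos x/2) (Real.sin x ^2) x := by
        have := ((hasDerivAt_id x).div_const 2).sub
          (((Real.hasDerivAt_sin x).mul (Real.hasDerivAt_cos x)).div_const 2)
        convert this using 1; rfl; rfl; rfl
        nlinarith [Real.sin_sq_add_cos_sq x]
      have := (h1.sub (h2.const_mul (2*c))).add h3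
      convert this using 1; rfl
      ring_nf)
    (by
      apply Continuous.intervalIntegrable
      fun_prop)
  rw [key]
  simp

/-- The one-dimensional objective. -/
def Qf (c : ℝ) : ℝ :=
  c^2/3 - 2*c*(Real.sin 1 - Real.cos 1) + (1/2 - Real.sin 1 * Real.cos 1/2)

lemma hbpos : 0 < Real.sin 1 - Real.cos 1 := by
  have hs1 : (3:ℝ)/4 < Real.sin 1 := by
    have := Real.sin_gt_sub_cube one_pos
    norm_num at this
    linarith
  have hc1 : Real.cos 1 ≤ 2/3 := Real.cos_one_le.trans (by norm_num)
  linarith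

lemma Qf_min (c : ℝ) : Qf (3*(Real.sin 1 - Real.cos 1)) ≤ Qf c := by
  unfold Qf
  nlinarith [sq_nonneg (c - 3*(Real.sin 1 - Real.cos 1))]

lemma Qf_eq_iff {c : ℝ} (h : Qf c = Qf (3*(Real.sin 1 - Real.cos 1))) :
    c = 3*(Real.sin 1 - Real.cos 1) := by
  have h2 : (c - 3*(Real.sin 1 - Real.cos 1))^2 = 0 := by
    unfold Qf at h; nlinarith
  have := pow_eq_zero_iff (n := 2) (by norm_num) |>.mp h2
  linarith

lemma Qf_zero_gt : Qf (3*(Real.sin 1 - Real.cos 1)) < Qf 0 := by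
  unfold Qf
  nlinarith [hbpos]

lemma hasGrad (b S : ℝ) (ϑ : E2) :
    HasGradientAt (fun ϑ : E2 => (ϑ 0 * ϑ 1)^2/3 - 2*(ϑ 0 * ϑ 1)*b + S) (Ggrad b ϑ) ϑ := by
  rw [hasGradientAt_iff_hasFDerivAt]
  set c₀ : ℝ := ϑ 0 * ϑ 1 with hc₀
  have hq : HasDerivAt (fun c : ℝ => c^2/3 - 2*c*b + S) (2*c₀/3 - 2*b) c₀ := by
    have h1 : HasDerivAt (fun c : ℝ => c^2/3) (2*c₀/3) c₀ := by
      simpa using (hasDerivAt_pow 2 c₀).div_const 3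
    have h2 : HasDerivAt (fun c : ℝ => 2*c*b) (2*b) c₀ := by
      have := (hasDerivAt_id c₀).const_mul (2*b)
      convert this using 1; rfl; rfl
      · ext c; simp [id_eq]; ring
      · ring
    simpa using (h1.sub h2).add_const S
  have hc : HasFDerivAt (fun ϑ : E2 => ϑ 0 * ϑ 1) (ϑ 0 • P 1 + ϑ 1 • P 0) ϑ :=
    (P 0).hasFDerivAt.mul (P 1).hasFDerivAt
  have := hq.comp_hasFDerivAt ϑ hc
  have heq : (InnerProductSpace.toDual ℝ E2) (Ggrad b ϑ)
      = (2*c₀/3 - 2*b) • (ϑ 0 • P 1 + ϑ 1 • P 0) := by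
    apply ContinuousLinearMap.ext
    intro w
    simp [Ggrad, Vv, InnerProductSpace.toDual_apply_apply, PiLp.inner_apply,
      Fin.sum_univ_two, EuclideanSpace.single_apply, P, RCLike.inner_apply,
      starRingEnd_apply]
    ring
  rw [heq]
  exact this

def Mlin : E2 →L[ℝ] E2 :=
  (P 1).smulRight (EuclideanSpace.single 0 (1:ℝ)) + (P 0).smulRight (EuclideanSpace.single 1 (1:ℝ))

def Ds (θ : E2) : E2 →L[ℝ] ℝ := (2/3 : ℝ) • (θ 0 • P 1 + θ 1 • P 0)

lemma Ds_apply (θ w : E2) : Ds θ w = 2/3 * (θ 0 * w 1 + θ 1 * w 0) := by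
  simp [Ds, P]; ring

lemma hasFDeriv_Ggrad (b : ℝ) (θ : E2) :
    HasFDerivAt (Ggrad b) ((2*(θ 0 * θ 1)/3 - 2*b) • Mlin + (Ds θ).smulRight (Vv (θ 1) (θ 0))) θ := by
  have hV : HasFDerivAt (fun ϑ : E2 => Vv (ϑ 1) (ϑ 0)) Mlin θ := Mlin.hasFDerivAt
  have hc : HasFDerivAt (fun ϑ : E2 => ϑ 0 * ϑ 1) (θ 0 • P 1 + θ 1 • P 0) θ :=
    (P 0).hasFDerivAt.mul (P 1).hasFDerivAt
  have hs : HasFDerivAt (fun ϑ : E2 => 2*(ϑ 0 * ϑ 1)/3 - 2*b) (Ds θ) θ := by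
    have := (hc.const_mul (2/3)).sub_const (2*b)
    convert this using 1; rfl; rfl; rfl; rfl
    ext ϑ; ring
    ext ϑ; ring
    rfl
  exact hs.smul hV

lemma rank_one (θ : E2) (h0 : 0 < θ 0) (h1 : 0 < θ 1) :
    Module.finrank ℝ (LinearMap.range ((Ds θ).smulRight (Vv (θ 1) (θ 0)) : E2 →ₗ[ℝ] E2)) = 1 := by
  set v : E2 := Vv (θ 1) (θ 0) with hv
  have hvne : v ≠ 0 := by
    intro h
    have := congrArg (fun z : E2 => z 0) h
    simp [hv, Vv_apply0] at this
    exact h1.ne' this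
  have hDsv : Ds θ v = 2/3 * (θ 0 ^ 2 + θ 1 ^ 2) := by
    rw [Ds_apply, hv, Vv_apply0, Vv_apply1]; ring
  have hr : (0:ℝ) < 2/3 * (θ 0 ^ 2 + θ 1 ^ 2) := by positivity
  have hrange : LinearMap.range ((Ds θ).smulRight v : E2 →ₗ[ℝ] E2) = Submodule.span ℝ {v} := by
    apply le_antisymm
    · rintro x ⟨w, rfl⟩
      simp only [ContinuousLinearMap.coe_coe, ContinuousLinearMap.smulRight_apply]
      exact Submodule.smul_mem _ _ (Submodule.mem_span_singleton_self v)
    · rw [Submodule.span_singleton_le_iff_mem]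
      refine ⟨(2/3 * (θ 0 ^ 2 + θ 1 ^ 2))⁻¹ • v, ?_⟩
      rw [ContinuousLinearMap.coe_coe, ContinuousLinearMap.smulRight_apply, (Ds θ).map_smul, hDsv, smul_eq_mul,
        inv_mul_cancel₀ hr.ne', one_smul]
  rw [hrange]
  exact finrank_span_singleton hvne

end StmtAux

/-- **A two-parameter network with ReLU activation** (Proposition 7.2).  For the objective
`f(θ₁,θ₂) = ∫₀¹ (θ₂·max(θ₁x, 0) − sin x)² dx`, with `U = {θ₁ > 0, θ₂ > 0}` and `𝓜` the set
of global minima: `𝓜 ∩ U` is the nonempty set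
`{θ : θ₁ > 0, θ₂ > 0, θ₁θ₂ = 3(sin 1 − cos 1)}`, and `f` is `C²` on `U` with Hessian of
rank `1` at every point of `𝓜 ∩ U`. -/
theorem stmt_19 (f : EuclideanSpace ℝ (Fin 2) → ℝ)
    (hf : ∀ θ : EuclideanSpace ℝ (Fin 2),
      f θ = ∫ x in Set.Icc (0 : ℝ) 1, (θ 1 * max (θ 0 * x) 0 - Real.sin x) ^ 2)
    (U : Set (EuclideanSpace ℝ (Fin 2)))
    (hU : U = {θ : EuclideanSpace ℝ (Fin 2) | 0 < θ 0 ∧ 0 < θ 1})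
    (𝓜 : Set (EuclideanSpace ℝ (Fin 2)))
    (h𝓜 : 𝓜 = {θ | f θ = ⨅ ϑ, f ϑ}) :
    (𝓜 ∩ U = {θ : EuclideanSpace ℝ (Fin 2) |
        0 < θ 0 ∧ 0 < θ 1 ∧ θ 0 * θ 1 = 3 * (Real.sin 1 - Real.cos 1)} ∧
      (𝓜 ∩ U).Nonempty) ∧
    (ContDiffOn ℝ 2 f U ∧
      ∀ θ ∈ 𝓜 ∩ U, Module.finrank ℝ (LinearMap.range (hess f θ : EuclideanSpace ℝ (Fin 2) →ₗ[ℝ] EuclideanSpace ℝ (Fin 2))) = 1) := by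
  have hb : 0 < Real.sin 1 - Real.cos 1 := hbpos
  -- values of f
  have hfpos : ∀ θ : E2, 0 < θ 0 → f θ = Qf (θ 0 * θ 1) := by
    intro θ h
    rw [hf θ]
    have hcong : Set.EqOn (fun x => (θ 1 * max (θ 0 * x) 0 - Real.sin x)^2)
        (fun x => ((θ 0 * θ 1)*x - Real.sin x)^2) (Set.Icc (0:ℝ) 1) := by
      intro x hx
      simp only
      rw [max_eq_left (mul_nonneg h.le hx.1)]
      ring
    rw [MeasureTheory.setIntegral_congr_fun measurableSet_Icc hcong]
    exact int1 _
  have hfneg : ∀ θ : E2, θ 0 ≤ 0 → f θ = Qf 0 := by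
    intro θ h
    rw [hf θ]
    have hcong : Set.EqOn (fun x => (θ 1 * max (θ 0 * x) 0 - Real.sin x)^2)
        (fun x => ((0:ℝ)*x - Real.sin x)^2) (Set.Icc (0:ℝ) 1) := by
      intro x hx
      simp only
      rw [max_eq_right (mul_nonpos_of_nonpos_of_nonneg h hx.1)]
      ring
    rw [MeasureTheory.setIntegral_congr_fun measurableSet_Icc hcong]
    exact int1 0
  -- the minimizer
  set θs : E2 := Vv 1 (3*(Real.sin 1 - Real.cos 1)) with hθs
  have hθs0 : θs 0 = 1 := Vv_apply0 _ _
  have hθs1 : θs 1 = 3*(Real.sin 1 - Real.cos 1) := Vv_apply1 _ _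
  have hfθs : f θs = Qf (3*(Real.sin 1 - Real.cos 1)) := by
    rw [hfpos θs (by rw [hθs0]; norm_num), hθs0, hθs1, one_mul]
  have hge : ∀ ϑ : E2, Qf (3*(Real.sin 1 - Real.cos 1)) ≤ f ϑ := by
    intro ϑ
    rcases le_or_gt (ϑ 0) 0 with h0 | h0
    · rw [hfneg ϑ h0]; exact Qf_min 0
    · rw [hfpos ϑ h0]; exact Qf_min _
  have hInf : (⨅ ϑ, f ϑ) = Qf (3*(Real.sin 1 - Real.cos 1)) := by
    apply le_antisymm
    · rw [← hfθs]
      exact ciInf_le ⟨Qf (3*(Real.sin 1 - Real.cos 1)), by rintro x ⟨ϑ, rfl⟩; exact hge ϑ⟩ θs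
    · exact le_ciInf hge
  have hM : 𝓜 = {θ : E2 | 0 < θ 0 ∧ 0 < θ 1 ∧ θ 0 * θ 1 = 3*(Real.sin 1 - Real.cos 1)} := by
    rw [h𝓜]
    ext θ
    simp only [Set.mem_setOf_eq, hInf]
    constructor
    · intro h
      rcases le_or_gt (θ 0) 0 with h0 | h0
      · rw [hfneg θ h0] at h
        exact absurd h.symm Qf_zero_gt.ne
      · rw [hfpos θ h0] at h
        have hc := Qf_eq_iff h
        have hc' : 0 < θ 0 * θ 1 := by rw [hc]; positivity
        rcases mul_pos_iff.mp hc' with ⟨_, h1⟩ | ⟨h0', _⟩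
        · exact ⟨h0, h1, hc⟩
        · exact absurd h0 (not_lt.mpr h0'.le)
    · rintro ⟨h0, h1, hc⟩
      rw [hfpos θ h0, hc]
  have hMU : 𝓜 ∩ U = {θ : E2 |
      0 < θ 0 ∧ 0 < θ 1 ∧ θ 0 * θ 1 = 3 * (Real.sin 1 - Real.cos 1)} := by
    rw [hM, hU]
    ext θ
    simp only [Set.mem_inter_iff, Set.mem_setOf_eq]
    tauto
  have hθsmem : θs ∈ 𝓜 ∩ U := by
    rw [hMU]
    refine ⟨by rw [hθs0]; norm_num, by rw [hθs1]; positivity, by rw [hθs0, hθs1]; ring⟩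
  -- C² regularity
  have hgC : ContDiff ℝ 2 (fun ϑ : E2 => Qf (ϑ 0 * ϑ 1)) := by
    unfold Qf
    have h0 : ContDiff ℝ 2 (fun ϑ : E2 => ϑ 0) := (P 0).contDiff
    have h1 : ContDiff ℝ 2 (fun ϑ : E2 => ϑ 1) := (P 1).contDiff
    exact ((((h0.mul h1).pow 2).div_const 3).sub
      ((contDiff_const.mul (h0.mul h1)).mul contDiff_const)).add contDiff_const
  have hC2 : ContDiffOn ℝ 2 f U := by
    refine ContDiffOn.congr hgC.contDiffOn ?_
    intro θ hθ
    rw [hU] at hθ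
    exact hfpos θ hθ.1
  have hUopen : IsOpen U := by
    rw [hU]
    have : {θ : E2 | 0 < θ 0 ∧ 0 < θ 1} = {θ : E2 | 0 < θ 0} ∩ {θ : E2 | 0 < θ 1} := rfl
    rw [this]
    exact (isOpen_lt continuous_const (P 0).continuous).inter
      (isOpen_lt continuous_const (P 1).continuous)
  -- gradient on U
  have hgradU : ∀ ϑ ∈ U, gradient f ϑ = Ggrad (Real.sin 1 - Real.cos 1) ϑ := by
    intro ϑ hϑ
    have hev : f =ᶠ[nhds ϑ] (fun ψ : E2 => (ψ 0 * ψ 1)^2/3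
        - 2*(ψ 0 * ψ 1)*(Real.sin 1 - Real.cos 1) + (1/2 - Real.sin 1 * Real.cos 1/2)) := by
      filter_upwards [hUopen.mem_nhds hϑ] with ψ hψ
      rw [hU] at hψ
      exact hfpos ψ hψ.1
    have hg := hasGrad (Real.sin 1 - Real.cos 1) (1/2 - Real.sin 1 * Real.cos 1/2) ϑ
    rw [hasGradientAt_iff_hasFDerivAt] at hg
    have : HasGradientAt f (Ggrad (Real.sin 1 - Real.cos 1) ϑ) ϑ := by
      rw [hasGradientAt_iff_hasFDerivAt]
      exact hg.congr_of_eventuallyEq hev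
    exact this.gradient
  refine ⟨⟨hMU, ⟨θs, hθsmem⟩⟩, hC2, ?_⟩
  intro θ hθ
  have hθ' := hθ
  rw [hMU] at hθ'
  obtain ⟨h0, h1, hc⟩ := hθ'
  have hθU : θ ∈ U := by rw [hU]; exact ⟨h0, h1⟩
  have hev2 : gradient f =ᶠ[nhds θ] Ggrad (Real.sin 1 - Real.cos 1) :=
    Filter.eventuallyEq_of_mem (hUopen.mem_nhds hθU) hgradU
  have hfd := hasFDeriv_Ggrad (Real.sin 1 - Real.cos 1) θ
  have hz : 2*(θ 0 * θ 1)/3 - 2*(Real.sin 1 - Real.cos 1) = 0 := by rw [hc]; ring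
  rw [hz] at hfd
  simp only [zero_smul, zero_add] at hfd
  have hhess : hess f θ = (Ds θ).smulRight (Vv (θ 1) (θ 0)) := by
    show fderiv ℝ (gradient f) θ = _
    rw [hev2.fderiv_eq, hfd.fderiv]
    ext w
    simp
  rw [hhess]
  exact rank_one θ h0 h1
end
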